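/- arXiv:2301.09543 — 4 statements merged into one kernel-verified Lean document; each statement's English description precedes it below -/
import Mathlib

section
/- Suppose x ≥ 16ℓ^{3/2} is real and ℓ ≥ 1. Then Σ_{σ} x^{c(σ)} ≤ exp(ℓ^{3/4})·ℓ!!·x^{ℓ/2}, where the sum is over fixed-point-free permutations σ of {1,...,ℓ} and c(σ) denotes the number of cycles of σ. -/
open scoped Classical

/-- The number of cycles of a permutation, counting fixed points. -/
def cycleCount {k : ℕ} (σ : Equiv.Perm (Fin k)) : ℕ :=
  Multiset.card σ.cycleType + (k - σ.support.card)

open Equiv Equiv.Perm Finset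

namespace SFPF

noncomputable def S (n : ℕ) (x : ℝ) : ℝ :=
  ∑ σ ∈ Finset.univ.filter (fun σ : Equiv.Perm (Fin n) => ∀ i, σ i ≠ i), x ^ (cycleCount σ)

noncomputable def ccc {α : Type*} [Fintype α] [DecidableEq α] (σ : Perm α) : ℕ :=
  Multiset.card σ.cycleType + (Fintype.card α - σ.support.card)

lemma cycleCount_eq_ccc {k : ℕ} (σ : Perm (Fin k)) : cycleCount σ = ccc σ := by
  simp [cycleCount, ccc]

lemma ccc_conj {α : Type*} [Fintype α] [DecidableEq α] (σ τ : Perm α) :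
    ccc (τ * σ * τ⁻¹) = ccc σ := by
  have hsupp : (τ * σ * τ⁻¹).support.card = σ.support.card := by
    rw [← sum_cycleType, cycleType_conj, sum_cycleType]
  unfold ccc
  rw [cycleType_conj, hsupp]

lemma ccc_swap_mul {α : Type*} [Fintype α] [DecidableEq α] (f : Perm α) (a : α)
    (h : f a ≠ a) : ccc (Equiv.swap a (f a) * f) = ccc f + 1 := by
  classical
  set g := Equiv.swap a (f a) * f with hg
  have hne : a ≠ f a := Ne.symm h
  by_cases h2 : f (f a) = a
  · -- the cycle through a is a transposition
    have hga : g a = a := by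
      simp [hg, Equiv.swap_apply_right]
    have hgfa : g (f a) = f a := by
      simp [hg, h2, Equiv.swap_apply_left]
    have hsw : Equiv.Perm.Disjoint (Equiv.swap a (f a)) g := by
      intro z
      by_cases hz1 : z = a
      · right; rw [hz1]; exact hga
      by_cases hz2 : z = f a
      · right; rw [hz2]; exact hgfa
      · left; exact Equiv.swap_apply_of_ne_of_ne hz1 hz2
    have hf : f = Equiv.swap a (f a) * g := by
      rw [hg, ← mul_assoc, Equiv.swap_mul_self, one_mul]
    have hctsw : (Equiv.swap a (f a)).cycleType = {2} := by
      rw [(isCycle_swap hne).cycleType, Equiv.Perm.support_swap hne]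
      simp [Finset.card_insert_of_notMem, hne]
    have hct : f.cycleType = {2} + g.cycleType := by
      have h1 := hsw.cycleType_mul
      rw [← hf, hctsw] at h1
      exact h1
    have hsupp : f.support = (Equiv.swap a (f a)).support ∪ g.support := by
      have h1 := hsw.support_mul
      rw [← hf] at h1
      exact h1
    have hdisj : _root_.Disjoint (Equiv.swap a (f a)).support g.support :=
      Equiv.Perm.disjoint_iff_disjoint_support.mp hsw
    have hcard : f.support.card = 2 + g.support.card := by
      rw [hsupp, Finset.card_union_of_disjoint hdisj, Equiv.Perm.support_swap hne]
      simp [Finset.card_insert_of_notMem, hne]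
    have hle : f.support.card ≤ Fintype.card α :=
      Finset.card_le_card (Finset.subset_univ _)
    have hctcard : Multiset.card f.cycleType = 1 + Multiset.card g.cycleType := by
      rw [hct]; simp [add_comm]
    unfold ccc
    omega
  · -- the cycle through a has length ≥ 3
    set c := f.cycleOf a with hc
    have hmem : c ∈ f.cycleFactorsFinset :=
      Equiv.Perm.cycleOf_mem_cycleFactorsFinset_iff.mpr (Equiv.Perm.mem_support.mpr h)
    set d := f * c⁻¹ with hd
    have hdisj : d.Disjoint c := Equiv.Perm.disjoint_mul_inv_of_mem_cycleFactorsFinset hmem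
    have hdc : d * c = f := by rw [hd, inv_mul_cancel_right]
    have hca : c a = f a := Equiv.Perm.cycleOf_apply_self f a
    have hsame : f.SameCycle a (f a) := ⟨1, by simp⟩
    have hcfa : c (f a) = f (f a) := by
      rw [hc, Equiv.Perm.cycleOf_apply, if_pos hsame]
    have hccyc : c.IsCycle := Equiv.Perm.isCycle_cycleOf f h
    have hcaa : c a ≠ a := by rw [hca]; exact h
    have hcca : c (c a) ≠ a := by rw [hca, hcfa]; exact h2
    have hc'cyc : (Equiv.swap a (c a) * c).IsCycle := hccyc.swap_mul hcaa hcca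
    have hsuppc' : (Equiv.swap a (c a) * c).support = c.support \ {a} :=
      Equiv.Perm.support_swap_mul_eq c a hcca
    -- supports of swap are inside support of c
    have hasupp : a ∈ c.support :=
      Equiv.Perm.mem_support_cycleOf_iff.mpr ⟨Equiv.Perm.SameCycle.refl f a, Equiv.Perm.mem_support.mpr h⟩
    have hfasupp : f a ∈ c.support :=
      Equiv.Perm.mem_support_cycleOf_iff.mpr ⟨hsame, Equiv.Perm.mem_support.mpr h⟩
    have hswsupp : (Equiv.swap a (f a)).support ⊆ c.support := by
      rw [Equiv.Perm.support_swap hne]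
      intro z hz
      simp only [Finset.mem_insert, Finset.mem_singleton] at hz
      rcases hz with rfl | rfl
      · exact hasupp
      · exact hfasupp
    have hdc_supp : _root_.Disjoint d.support c.support :=
      Equiv.Perm.disjoint_iff_disjoint_support.mp hdisj
    have hswd : (Equiv.swap a (f a)).Disjoint d := by
      rw [Equiv.Perm.disjoint_iff_disjoint_support]
      exact Finset.disjoint_of_subset_left hswsupp hdc_supp.symm
    have hstep : d * (Equiv.swap a (f a) * c) = Equiv.swap a (f a) * (d * c) := by
      rw [← mul_assoc, ← (hswd.commute).eq, mul_assoc]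
    have hgd : g = d * (Equiv.swap a (c a) * c) := by
      rw [hca, hstep, hdc]
    have hdisj2 : d.Disjoint (Equiv.swap a (c a) * c) := by
      rw [Equiv.Perm.disjoint_iff_disjoint_support]
      refine hdc_supp.mono_right ?_
      rw [hsuppc']
      exact Finset.sdiff_subset
    -- cycle type computations
    have hctg : g.cycleType = d.cycleType + {(Equiv.swap a (c a) * c).support.card} := by
      rw [hgd, hdisj2.cycleType_mul, hc'cyc.cycleType]
    have hctf : f.cycleType = d.cycleType + {c.support.card} := by
      rw [← hdc, hdisj.cycleType_mul, hccyc.cycleType]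
    -- support of g
    have hsuppg : g.support = f.support \ {a} := Equiv.Perm.support_swap_mul_eq f a h2
    have hafsupp : a ∈ f.support := Equiv.Perm.mem_support.mpr h
    have hcardg : g.support.card = f.support.card - 1 := by
      rw [hsuppg, Finset.sdiff_singleton_eq_erase, Finset.card_erase_of_mem hafsupp]
    have h1le : 1 ≤ f.support.card := Finset.card_pos.mpr ⟨a, hafsupp⟩
    have hle : f.support.card ≤ Fintype.card α :=
      Finset.card_le_card (Finset.subset_univ _)
    have hcardctg : Multiset.card g.cycleType = Multiset.card d.cycleType + 1 := by
      rw [hctg]; simp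
    have hcardctf : Multiset.card f.cycleType = Multiset.card d.cycleType + 1 := by
      rw [hctf]; simp
    unfold ccc
    omega

def feq (n : ℕ) : Fin n ≃ {y : Fin (n+1) // y ≠ 0} where
  toFun i := ⟨i.succ, Fin.succ_ne_zero i⟩
  invFun y := Fin.pred y.1 y.2
  left_inv i := by simp
  right_inv y := by simp

lemma cycleType_decomposeFin_zero {n : ℕ} (e : Perm (Fin n)) :
    (Equiv.Perm.decomposeFin.symm (0, e)).cycleType = e.cycleType := by
  have heq : Equiv.Perm.decomposeFin.symm (0, e) = e.extendDomain (feq n) := by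
    ext z
    refine Fin.cases ?_ (fun i => ?_) z
    · rw [Equiv.Perm.decomposeFin_symm_apply_zero,
        Equiv.Perm.extendDomain_apply_not_subtype]
      simp
    · rw [Equiv.Perm.decomposeFin_symm_apply_succ]
      have : (i.succ : Fin (n+1)) = ((feq n i : {y : Fin (n+1) // y ≠ 0}) : Fin (n+1)) := rfl
      rw [this, Equiv.Perm.extendDomain_apply_image]
      simp [feq]
  rw [heq, Equiv.Perm.cycleType_extendDomain]

lemma ccc_decomposeFin_zero {n : ℕ} (e : Perm (Fin n)) :
    ccc (Equiv.Perm.decomposeFin.symm (0, e)) = ccc e + 1 := by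
  have hct := cycleType_decomposeFin_zero e
  have hsupp : (Equiv.Perm.decomposeFin.symm (0, e)).support.card = e.support.card := by
    rw [← sum_cycleType, hct, sum_cycleType]
  have hle : e.support.card ≤ n := by
    simpa using Finset.card_le_card (Finset.subset_univ e.support)
  unfold ccc
  rw [hct, hsupp, Fintype.card_fin, Fintype.card_fin]
  omega

lemma decomposeFin_eq_swap_mul {n : ℕ} (p : Fin (n + 1)) (e : Perm (Fin n)) :
    Equiv.Perm.decomposeFin.symm (p, e) = Equiv.swap 0 p * Equiv.Perm.decomposeFin.symm (0, e) := by
  ext z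
  refine Fin.cases ?_ (fun i => ?_) z
  · simp [Equiv.Perm.decomposeFin_symm_apply_zero]
  · simp [Equiv.Perm.decomposeFin_symm_apply_succ]

lemma ccc_decomposeFin_ne_zero {n : ℕ} (p : Fin (n + 1)) (e : Perm (Fin n)) (hp : p ≠ 0) :
    ccc (Equiv.Perm.decomposeFin.symm (p, e)) = ccc e := by
  set σ := Equiv.Perm.decomposeFin.symm (p, e) with hσ
  have h0 : σ 0 = p := Equiv.Perm.decomposeFin_symm_apply_zero p e
  have h : σ 0 ≠ 0 := by rw [h0]; exact hp
  have key := ccc_swap_mul σ 0 h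
  have : Equiv.swap 0 (σ 0) * σ = Equiv.Perm.decomposeFin.symm (0, e) := by
    rw [h0, hσ, decomposeFin_eq_swap_mul p e, ← mul_assoc, Equiv.swap_mul_self, one_mul]
  rw [this, ccc_decomposeFin_zero] at key
  omega

lemma fpf_decomposeFin_iff {n : ℕ} (p : Fin (n + 1)) (e : Perm (Fin n)) :
    (∀ i, Equiv.Perm.decomposeFin.symm (p, e) i ≠ i) ↔
      (p ≠ 0 ∧ ∀ i, e i = i → i.succ = p) := by
  constructor
  · intro hfpf
    constructor
    · intro hp
      apply hfpf 0
      rw [Equiv.Perm.decomposeFin_symm_apply_zero, hp]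
    · intro i hei
      by_contra hip
      apply hfpf i.succ
      rw [Equiv.Perm.decomposeFin_symm_apply_succ, hei,
        Equiv.swap_apply_of_ne_of_ne (Fin.succ_ne_zero i) hip]
  · rintro ⟨hp, hfix⟩ z
    refine Fin.cases ?_ (fun i => ?_) z
    · rw [Equiv.Perm.decomposeFin_symm_apply_zero]
      exact hp
    · rw [Equiv.Perm.decomposeFin_symm_apply_succ]
      by_cases hei : e i = i
      · rw [hei, hfix i hei, Equiv.swap_apply_right]
        exact Ne.symm hp
      · by_cases hp2 : (e i).succ = p
        · rw [hp2, Equiv.swap_apply_right]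
          exact (Fin.succ_ne_zero i).symm
        · rw [Equiv.swap_apply_of_ne_of_ne (Fin.succ_ne_zero (e i)) hp2]
          simp only [ne_eq, Fin.succ_inj]
          exact hei

lemma fp_decomposeFin_zero_iff {n : ℕ} (d : Perm (Fin n)) :
    (∀ i, Equiv.Perm.decomposeFin.symm (0, d) i = i ↔ i = 0) ↔ (∀ i, d i ≠ i) := by
  constructor
  · intro h i hdi
    have := (h i.succ).mp ?_
    · exact Fin.succ_ne_zero i this
    · rw [Equiv.Perm.decomposeFin_symm_apply_succ, hdi]
      simp
  · intro hd z
    refine Fin.cases ?_ (fun i => ?_) z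
    · simp [Equiv.Perm.decomposeFin_symm_apply_zero]
    · rw [Equiv.Perm.decomposeFin_symm_apply_succ]
      simp only [Equiv.swap_self, Equiv.refl_apply, Fin.succ_inj]
      constructor
      · intro h; exact absurd h (hd i)
      · intro h; exact absurd h (Fin.succ_ne_zero i)

/-- sum over permutations with exactly one fixed point `j` -/
lemma sum_one_fp (n : ℕ) (x : ℝ) (j : Fin (n + 1)) :
    (∑ e ∈ Finset.univ.filter (fun e : Perm (Fin (n+1)) => ∀ i, e i = i ↔ i = j),
      x ^ ccc e) = x * S n x := by
  -- step a : conjugate j to 0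
  have hstep1 : (∑ e ∈ Finset.univ.filter (fun e : Perm (Fin (n+1)) => ∀ i, e i = i ↔ i = j),
      x ^ ccc e)
      = ∑ e ∈ Finset.univ.filter (fun e : Perm (Fin (n+1)) => ∀ i, e i = i ↔ i = 0),
      x ^ ccc e := by
    refine Finset.sum_nbij' (fun e => Equiv.swap 0 j * e * Equiv.swap 0 j)
      (fun e => Equiv.swap 0 j * e * Equiv.swap 0 j) ?_ ?_ ?_ ?_ ?_
    · intro e he
      simp only [Finset.mem_filter, Finset.mem_univ, true_and] at he ⊢
      intro i
      have : (Equiv.swap 0 j * e * Equiv.swap 0 j) i = i ↔ e (Equiv.swap 0 j i) = Equiv.swap 0 j i := by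
        rw [Equiv.Perm.mul_apply, Equiv.Perm.mul_apply]
        constructor
        · intro hh
          conv_rhs => rw [← hh]
          rw [Equiv.swap_apply_self]
        · intro hh; rw [hh, Equiv.swap_apply_self]
      rw [this, he (Equiv.swap 0 j i)]
      constructor
      · intro hh
        have : Equiv.swap 0 j (Equiv.swap 0 j i) = Equiv.swap 0 j j := by rw [hh]
        rwa [Equiv.swap_apply_self, Equiv.swap_apply_right] at this
      · intro hh; rw [hh, Equiv.swap_apply_left]
    · intro e he
      simp only [Finset.mem_filter, Finset.mem_univ, true_and] at he ⊢
      intro i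
      have : (Equiv.swap 0 j * e * Equiv.swap 0 j) i = i ↔ e (Equiv.swap 0 j i) = Equiv.swap 0 j i := by
        rw [Equiv.Perm.mul_apply, Equiv.Perm.mul_apply]
        constructor
        · intro hh
          conv_rhs => rw [← hh]
          rw [Equiv.swap_apply_self]
        · intro hh; rw [hh, Equiv.swap_apply_self]
      rw [this, he (Equiv.swap 0 j i)]
      constructor
      · intro hh
        have : Equiv.swap 0 j (Equiv.swap 0 j i) = Equiv.swap 0 j 0 := by rw [hh]
        rwa [Equiv.swap_apply_self, Equiv.swap_apply_left] at this
      · intro hh; rw [hh, Equiv.swap_apply_right]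
    · intro e _
      ext z
      simp [Equiv.Perm.mul_apply, Equiv.swap_apply_self]
    · intro e _
      ext z
      simp [Equiv.Perm.mul_apply, Equiv.swap_apply_self]
    · intro e _
      have h2 : ccc (Equiv.swap 0 j * e * Equiv.swap 0 j) = ccc e := by
        have : Equiv.swap 0 j * e * Equiv.swap 0 j = Equiv.swap 0 j * e * (Equiv.swap 0 j)⁻¹ := by
          rw [Equiv.swap_inv]
        rw [this, ccc_conj]
      simp only [h2]
  rw [hstep1]
  -- step b : decomposeFin at 0
  have hstep2 : (∑ d ∈ Finset.univ.filter (fun d : Perm (Fin n) => ∀ i, d i ≠ i),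
        x ^ (ccc d + 1))
      = ∑ e ∈ Finset.univ.filter (fun e : Perm (Fin (n+1)) => ∀ i, e i = i ↔ i = 0),
      x ^ ccc e := by
    refine Finset.sum_nbij' (fun d => Equiv.Perm.decomposeFin.symm (0, d))
      (fun e => (Equiv.Perm.decomposeFin e).2) ?_ ?_ ?_ ?_ ?_
    · intro d hd
      simp only [Finset.mem_filter, Finset.mem_univ, true_and] at hd ⊢
      exact (fp_decomposeFin_zero_iff d).mpr hd
    · intro e he
      simp only [Finset.mem_filter, Finset.mem_univ, true_and] at he ⊢
      have hp0 : (Equiv.Perm.decomposeFin e).1 = 0 := by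
        have h1 : e 0 = 0 := (he 0).mpr rfl
        have h2 : e 0 = (Equiv.Perm.decomposeFin e).1 := by
          conv_lhs => rw [← Equiv.Perm.decomposeFin.symm_apply_apply e,
            ← Prod.mk.eta (p := Equiv.Perm.decomposeFin e)]
          rw [Equiv.Perm.decomposeFin_symm_apply_zero]
        rw [← h2, h1]
      have hee : Equiv.Perm.decomposeFin.symm (0, (Equiv.Perm.decomposeFin e).2) = e := by
        rw [← hp0, Prod.mk.eta, Equiv.symm_apply_apply]
      rw [← fp_decomposeFin_zero_iff, hee]
      exact he
    · intro d _
      simp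
    · intro e he
      simp only [Finset.mem_filter, Finset.mem_univ, true_and] at he
      have hp0 : (Equiv.Perm.decomposeFin e).1 = 0 := by
        have h1 : e 0 = 0 := (he 0).mpr rfl
        have h2 : e 0 = (Equiv.Perm.decomposeFin e).1 := by
          conv_lhs => rw [← Equiv.Perm.decomposeFin.symm_apply_apply e,
            ← Prod.mk.eta (p := Equiv.Perm.decomposeFin e)]
          rw [Equiv.Perm.decomposeFin_symm_apply_zero]
        rw [← h2, h1]
      show Equiv.Perm.decomposeFin.symm (0, (Equiv.Perm.decomposeFin e).2) = e
      rw [← hp0, Prod.mk.eta, Equiv.symm_apply_apply]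
    · intro d _
      rw [ccc_decomposeFin_zero]
  rw [← hstep2]
  -- now the elementary sum
  rw [S, Finset.mul_sum]
  apply Finset.sum_congr rfl
  intro d hd
  rw [cycleCount_eq_ccc, pow_succ, mul_comm]

lemma S_zero (x : ℝ) : S 0 x = 1 := by
  have huniv : (Finset.univ.filter (fun σ : Equiv.Perm (Fin 0) => ∀ i, σ i ≠ i)) = {1} := by
    ext σ
    simp only [Finset.mem_filter, Finset.mem_univ, true_and, Finset.mem_singleton]
    constructor
    · intro _; ext i; exact i.elim0
    · intro _ i; exact i.elim0
  rw [S, huniv, Finset.sum_singleton]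
  have : cycleCount (1 : Perm (Fin 0)) = 0 := by
    simp [cycleCount]
  rw [this, pow_zero]

lemma S_one (x : ℝ) : S 1 x = 0 := by
  have huniv : (Finset.univ.filter (fun σ : Equiv.Perm (Fin 1) => ∀ i, σ i ≠ i)) = ∅ := by
    ext σ
    simp only [Finset.mem_filter, Finset.mem_univ, true_and, Finset.notMem_empty, iff_false]
    intro h
    exact h 0 (Subsingleton.elim _ _)
  rw [S, huniv, Finset.sum_empty]

lemma S_rec (n : ℕ) (x : ℝ) : S (n + 2) x = (n + 1 : ℝ) * (S (n + 1) x + x * S n x) := by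
  have hconst : ∀ p : Fin (n + 2), p ≠ 0 →
      (∑ e : Perm (Fin (n + 1)),
        if (∀ i, Equiv.Perm.decomposeFin.symm (p, e) i ≠ i)
        then x ^ ccc (Equiv.Perm.decomposeFin.symm (p, e)) else 0)
      = S (n + 1) x + x * S n x := by
    intro p hp
    set j : Fin (n + 1) := p.pred hp with hj
    have hjp : j.succ = p := Fin.succ_pred p hp
    have hterm : ∀ e : Perm (Fin (n + 1)),
        (if (∀ i, Equiv.Perm.decomposeFin.symm (p, e) i ≠ i)
         then x ^ ccc (Equiv.Perm.decomposeFin.symm (p, e)) else 0)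
        = (if (∀ i, e i = i → i = j) then x ^ ccc e else 0) := by
      intro e
      have hiff : (∀ i, Equiv.Perm.decomposeFin.symm (p, e) i ≠ i) ↔ (∀ i, e i = i → i = j) := by
        rw [fpf_decomposeFin_iff]
        simp only [hp, ne_eq, not_false_eq_true, true_and]
        constructor
        · intro h i hi
          have := h i hi
          rw [← hjp] at this
          exact Fin.succ_injective _ this
        · intro h i hi
          rw [h i hi, hjp]
      rw [ccc_decomposeFin_ne_zero p e hp]
      exact if_congr hiff rfl rfl
    simp only [hterm]
    rw [← Finset.sum_filter]
    have hsplit := Finset.sum_filter_add_sum_filter_not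
      (Finset.univ.filter (fun e : Perm (Fin (n+1)) => ∀ i, e i = i → i = j))
      (fun e => e j = j) (fun e => x ^ ccc e)
    rw [← hsplit]
    have hfil1 : (Finset.univ.filter (fun e : Perm (Fin (n+1)) => ∀ i, e i = i → i = j)).filter
        (fun e => e j = j)
        = Finset.univ.filter (fun e : Perm (Fin (n+1)) => ∀ i, e i = i ↔ i = j) := by
      rw [Finset.filter_filter]
      apply Finset.filter_congr
      intro e _
      constructor
      · rintro ⟨h1, h2⟩ i
        exact ⟨h1 i, fun hij => by rw [hij]; exact h2⟩
      · intro h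
        exact ⟨fun i hi => (h i).mp hi, (h j).mpr rfl⟩
    have hfil2 : (Finset.univ.filter (fun e : Perm (Fin (n+1)) => ∀ i, e i = i → i = j)).filter
        (fun e => ¬ e j = j)
        = Finset.univ.filter (fun e : Perm (Fin (n+1)) => ∀ i, e i ≠ i) := by
      rw [Finset.filter_filter]
      apply Finset.filter_congr
      intro e _
      constructor
      · rintro ⟨h1, h2⟩ i hi
        exact h2 (by rw [← h1 i hi]; exact hi)
      · intro h
        exact ⟨fun i hi => absurd hi (h i), h j⟩
    rw [hfil1, hfil2, sum_one_fp]
    have : (∑ e ∈ Finset.univ.filter (fun e : Perm (Fin (n+1)) => ∀ i, e i ≠ i), x ^ ccc e)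
        = S (n + 1) x := by
      rw [S]
      apply Finset.sum_congr rfl
      intro e _
      rw [cycleCount_eq_ccc]
    rw [this, add_comm]
  -- main computation
  rw [S]
  have h1 : (∑ σ ∈ Finset.univ.filter (fun σ : Equiv.Perm (Fin (n+2)) => ∀ i, σ i ≠ i),
      x ^ (cycleCount σ))
      = ∑ σ : Equiv.Perm (Fin (n+2)), if (∀ i, σ i ≠ i) then x ^ ccc σ else 0 := by
    rw [Finset.sum_filter]
    apply Finset.sum_congr rfl
    intro σ _
    rw [cycleCount_eq_ccc]
  rw [h1, ← Equiv.sum_comp (Equiv.Perm.decomposeFin.symm)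
    (fun σ : Equiv.Perm (Fin (n+2)) => if (∀ i, σ i ≠ i) then x ^ ccc σ else 0),
    Fintype.sum_prod_type]
  have h2 : ∀ p : Fin (n + 2),
      (∑ e : Perm (Fin (n + 1)),
        if (∀ i, Equiv.Perm.decomposeFin.symm (p, e) i ≠ i)
        then x ^ ccc (Equiv.Perm.decomposeFin.symm (p, e)) else 0)
      = if p = 0 then 0 else (S (n + 1) x + x * S n x) := by
    intro p
    by_cases hp : p = 0
    · rw [if_pos hp]
      apply Finset.sum_eq_zero
      intro e _
      rw [if_neg]
      intro hcon
      exact ((fpf_decomposeFin_iff p e).mp hcon).1 hp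
    · rw [if_neg hp]
      exact hconst p hp
  simp only [h2]
  rw [Finset.sum_ite, Finset.sum_const, Finset.sum_const, smul_zero, zero_add]
  have hcard : (Finset.univ.filter (fun p : Fin (n + 2) => ¬ p = 0)).card = n + 1 := by
    have : (Finset.univ.filter (fun p : Fin (n + 2) => ¬ p = 0))
        = Finset.univ.erase 0 := by
      ext p
      simp [Finset.mem_erase, and_comm]
    rw [this, Finset.card_erase_of_mem (Finset.mem_univ _)]
    simp
  rw [hcard, nsmul_eq_mul]
  push_cast
  ring

lemma doubleFactorial_le_succ : ∀ n : ℕ, n.doubleFactorial ≤ (n+1).doubleFactorial := by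
  intro n
  induction n using Nat.twoStepInduction with
  | zero => simp [Nat.doubleFactorial]
  | one => simp [Nat.doubleFactorial]
  | more n ih _ =>
    rw [Nat.doubleFactorial_add_two, show n + 2 + 1 = n + 1 + 2 from rfl,
      Nat.doubleFactorial_add_two]
    calc (n+2) * n.doubleFactorial ≤ (n+3) * (n+1).doubleFactorial := by
          exact Nat.mul_le_mul (by omega) ih
      _ = (n+1+2) * (n+1).doubleFactorial := rfl

lemma factorial_le_sq_doubleFactorial (ℓ : ℕ) (hℓ : 1 ≤ ℓ) :
    ℓ.factorial ≤ ℓ.doubleFactorial ^ 2 := by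
  obtain ⟨m, rfl⟩ := Nat.exists_eq_add_of_le hℓ
  rw [add_comm]
  calc (m+1).factorial = (m+1).doubleFactorial * m.doubleFactorial :=
        Nat.factorial_eq_mul_doubleFactorial m
    _ ≤ (m+1).doubleFactorial * (m+1).doubleFactorial :=
        Nat.mul_le_mul_left _ (doubleFactorial_le_succ m)
    _ = (m+1).doubleFactorial ^ 2 := (sq _).symm

lemma analytic_bound (ℓ : ℕ) (hℓ : 1 ≤ ℓ) (x : ℝ) (hx : 16 * (ℓ : ℝ) ^ ((3 : ℝ)/2) ≤ x)
    (f : ℕ → ℝ) (hf0 : f 0 = 1) (hf1 : f 1 = 0)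
    (hrec : ∀ n, f (n + 2) = (n + 1 : ℝ) * (f (n + 1) + x * f n)) :
    f ℓ ≤ Real.exp ((ℓ : ℝ) ^ ((3 : ℝ)/4)) * (Nat.doubleFactorial ℓ) * x ^ ((ℓ : ℝ)/2) := by
  have hl0 : (0:ℝ) < ℓ := by exact_mod_cast hℓ
  have hl1 : (1:ℝ) ≤ ℓ := by exact_mod_cast hℓ
  set δ : ℝ := (ℓ : ℝ) ^ (-((1:ℝ)/4)) / 4 with hδ
  have hδ0 : 0 < δ := by positivity
  set g : ℝ := 1 + δ with hgdef
  have hg1 : 1 ≤ g := by rw [hgdef]; linarith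
  have hg0 : 0 ≤ g := by linarith
  have hx0 : (0:ℝ) ≤ x := by
    have : (0:ℝ) ≤ 16 * (ℓ : ℝ) ^ ((3 : ℝ)/2) := by positivity
    linarith
  set s : ℝ := Real.sqrt x with hsdef
  have hs0 : 0 ≤ s := Real.sqrt_nonneg x
  have hs2 : s * s = x := Real.mul_self_sqrt hx0
  -- lower bound for s
  have hsl : 4 * (ℓ:ℝ) ^ ((3:ℝ)/4) ≤ s := by
    have h1 : Real.sqrt (16 * (ℓ : ℝ) ^ ((3 : ℝ)/2)) ≤ s := Real.sqrt_le_sqrt hx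
    have h2 : Real.sqrt (16 * (ℓ : ℝ) ^ ((3 : ℝ)/2))
        = 4 * (ℓ:ℝ) ^ ((3:ℝ)/4) := by
      rw [Real.sqrt_mul (by norm_num : (0:ℝ) ≤ 16)]
      congr 1
      · rw [show (16:ℝ) = 4^2 by norm_num, Real.sqrt_sq (by norm_num : (0:ℝ) ≤ 4)]
      · rw [Real.sqrt_eq_rpow, ← Real.rpow_mul (le_of_lt hl0)]
        norm_num
    rw [h2] at h1
    exact h1
  -- key: s * δ ≥ √ℓ
  have hsδ : Real.sqrt (ℓ:ℝ) ≤ s * δ := by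
    have h1 : 4 * (ℓ:ℝ) ^ ((3:ℝ)/4) * δ ≤ s * δ :=
      mul_le_mul_of_nonneg_right hsl (le_of_lt hδ0)
    have h2 : 4 * (ℓ:ℝ) ^ ((3:ℝ)/4) * δ = Real.sqrt (ℓ:ℝ) := by
      rw [Real.sqrt_eq_rpow, hδ]
      rw [show (4:ℝ) * (ℓ:ℝ) ^ ((3:ℝ)/4) * ((ℓ:ℝ) ^ (-((1:ℝ)/4)) / 4)
        = (ℓ:ℝ) ^ ((3:ℝ)/4) * (ℓ:ℝ) ^ (-((1:ℝ)/4)) from by ring]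
      rw [← Real.rpow_add hl0]
      norm_num
    rw [h2] at h1
    exact h1
  -- the key factor inequality
  have hkey : ∀ m : ℕ, m ≤ ℓ → Real.sqrt (m:ℝ) * g + s ≤ s * (g * g) := by
    intro m hm
    have hsm : Real.sqrt (m:ℝ) ≤ Real.sqrt (ℓ:ℝ) := by
      apply Real.sqrt_le_sqrt; exact_mod_cast hm
    have h1 : Real.sqrt (m:ℝ) ≤ s * δ := le_trans hsm hsδ
    have hgg : s * (g * g) = s + 2*(s*δ) + (s*δ)*δ := by rw [hgdef]; ring
    have h2 : Real.sqrt (m:ℝ) * g ≤ (s*δ) * g := mul_le_mul_of_nonneg_right h1 hg0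
    have h3 : (s*δ)*g = (s*δ) + (s*δ)*δ := by rw [hgdef]; ring
    rw [h3] at h2
    have h4 : 0 ≤ s*δ := mul_nonneg hs0 hδ0.le
    rw [hgg]
    linarith
  -- the inductive bound
  have hbound : ∀ n : ℕ, n ≤ ℓ → f n ≤ Real.sqrt (n.factorial : ℝ) * s ^ n * g ^ n := by
    intro n
    induction n using Nat.twoStepInduction with
    | zero => intro _; simp [hf0]
    | one => intro _; rw [hf1]; positivity
    | more n ih1 ih2 =>
      intro hn2
      have hn1 : n + 1 ≤ ℓ := by omega
      have hn0 : n ≤ ℓ := by omega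
      have b1 := ih2 hn1
      have b2 := ih1 hn0
      set A : ℝ := Real.sqrt (n.factorial : ℝ) with hA
      have hA0 : 0 ≤ A := Real.sqrt_nonneg _
      set u : ℝ := Real.sqrt ((n:ℝ) + 1) with hu
      set v : ℝ := Real.sqrt ((n:ℝ) + 2) with hv
      have hu0 : 0 ≤ u := Real.sqrt_nonneg _
      have hv0 : 0 ≤ v := Real.sqrt_nonneg _
      have hu2 : u * u = (n:ℝ) + 1 := Real.mul_self_sqrt (by positivity)
      have huv : u ≤ v := Real.sqrt_le_sqrt (by linarith)
      have hfac1 : Real.sqrt (((n+1).factorial : ℝ)) = u * A := by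
        rw [hA, hu, ← Real.sqrt_mul (by positivity)]
        congr 1
        rw [Nat.factorial_succ]
        push_cast
        ring
      have hfac2 : Real.sqrt (((n+2).factorial : ℝ)) = v * (u * A) := by
        rw [← hfac1, ← Real.sqrt_mul (by positivity)]
        congr 1
        rw [show n + 2 = (n+1) + 1 from rfl, Nat.factorial_succ]
        push_cast
        ring
      rw [hrec n]
      have step1 : (↑n + 1) * (f (n+1) + x * f n)
          ≤ (↑n + 1) * ((u * A * s ^ (n+1) * g ^ (n+1)) + x * (A * s ^ n * g ^ n)) := by
        apply mul_le_mul_of_nonneg_left _ (by positivity : (0:ℝ) ≤ (n:ℝ)+1)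
        apply add_le_add
        · rw [hfac1] at b1
          exact b1
        · exact mul_le_mul_of_nonneg_left b2 hx0
      refine le_trans step1 ?_
      rw [hfac2]
      have hkey' : u * g + s ≤ s * (g * g) := by
        have := hkey (n+1) hn1
        rwa [show ((n+1 : ℕ):ℝ) = (n:ℝ)+1 by push_cast; ring] at this
      have c2 : s * (u * g + s) ≤ s * (s * (g * g)) :=
        mul_le_mul_of_nonneg_left hkey' hs0
      have c3 : (u * u) * (s * (u * g + s)) ≤ (u * u) * (s * (s * (g * g))) :=
        mul_le_mul_of_nonneg_left c2 (by positivity)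
      have c5 : u * (u * ((s*s) * (g*g))) ≤ v * (u * ((s*s) * (g*g))) :=
        mul_le_mul_of_nonneg_right huv (by positivity)
      have hfactor : ((n:ℝ) + 1) * (u * s * g + s * s) ≤ v * u * (s * s) * (g * g) := by
        calc ((n:ℝ) + 1) * (u * s * g + s * s) = (u*u) * (s * (u * g + s)) := by
              rw [← hu2]; ring
          _ ≤ (u*u) * (s * (s * (g*g))) := c3
          _ = u * (u * ((s*s) * (g*g))) := by ring
          _ ≤ v * (u * ((s*s) * (g*g))) := c5
          _ = v * u * (s*s) * (g*g) := by ring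
      calc (↑n + 1) * ((u * A * s ^ (n+1) * g ^ (n+1)) + x * (A * s ^ n * g ^ n))
          = (A * s ^ n * g ^ n) * (((n:ℝ) + 1) * (u * s * g + s * s)) := by
            rw [← hs2, pow_succ, pow_succ]; ring
        _ ≤ (A * s ^ n * g ^ n) * (v * u * (s * s) * (g * g)) := by
            apply mul_le_mul_of_nonneg_left hfactor (by positivity)
        _ = v * (u * A) * s ^ (n+2) * g ^ (n+2) := by
            rw [pow_succ, pow_succ, pow_succ, pow_succ]; ring
  -- final assembly
  have hfin := hbound ℓ le_rfl
  have hsqle : Real.sqrt (ℓ.factorial : ℝ) ≤ (ℓ.doubleFactorial : ℝ) := by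
    have h1 : (ℓ.factorial : ℝ) ≤ ((ℓ.doubleFactorial : ℝ)) ^ 2 := by
      exact_mod_cast factorial_le_sq_doubleFactorial ℓ hℓ
    calc Real.sqrt (ℓ.factorial : ℝ) ≤ Real.sqrt (((ℓ.doubleFactorial : ℝ))^2) :=
          Real.sqrt_le_sqrt h1
      _ = (ℓ.doubleFactorial : ℝ) := Real.sqrt_sq (by positivity)
  have hspow : s ^ ℓ = x ^ ((ℓ : ℝ)/2) := by
    rw [hsdef, Real.sqrt_eq_rpow, ← Real.rpow_natCast (x ^ ((1:ℝ)/2)) ℓ, ← Real.rpow_mul hx0]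
    congr 1
    ring
  have hgpow : g ^ ℓ ≤ Real.exp ((ℓ : ℝ) ^ ((3 : ℝ)/4)) := by
    have h1 : g ≤ Real.exp δ := by
      rw [hgdef, add_comm]; exact Real.add_one_le_exp δ
    have h2 : g ^ ℓ ≤ (Real.exp δ) ^ ℓ := pow_le_pow_left₀ hg0 h1 ℓ
    have h3 : (Real.exp δ) ^ ℓ = Real.exp ((ℓ:ℝ) * δ) := by
      rw [← Real.exp_nat_mul]
    have h4 : (ℓ:ℝ) * δ ≤ (ℓ : ℝ) ^ ((3 : ℝ)/4) := by
      rw [hδ]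
      have : (ℓ:ℝ) * ((ℓ : ℝ) ^ (-((1:ℝ)/4)) / 4) = (ℓ:ℝ) ^ ((3:ℝ)/4) / 4 := by
        rw [show (ℓ:ℝ) * ((ℓ : ℝ) ^ (-((1:ℝ)/4)) / 4) =
          ((ℓ:ℝ) ^ ((1:ℝ)) * (ℓ : ℝ) ^ (-((1:ℝ)/4))) / 4 by rw [Real.rpow_one]; ring,
          ← Real.rpow_add hl0]
        norm_num
      rw [this]
      have hpos : 0 ≤ (ℓ : ℝ) ^ ((3:ℝ)/4) := by positivity
      linarith
    calc g ^ ℓ ≤ (Real.exp δ) ^ ℓ := h2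
      _ = Real.exp ((ℓ:ℝ) * δ) := h3
      _ ≤ Real.exp ((ℓ : ℝ) ^ ((3 : ℝ)/4)) := Real.exp_le_exp.mpr h4
  calc f ℓ ≤ Real.sqrt (ℓ.factorial : ℝ) * s ^ ℓ * g ^ ℓ := hfin
    _ ≤ (ℓ.doubleFactorial : ℝ) * s ^ ℓ * Real.exp ((ℓ : ℝ) ^ ((3 : ℝ)/4)) := by
        apply mul_le_mul
        · exact mul_le_mul_of_nonneg_right hsqle (by positivity)
        · exact hgpow
        · positivity
        · positivity
    _ = Real.exp ((ℓ : ℝ) ^ ((3 : ℝ)/4)) * (ℓ.doubleFactorial : ℝ) * x ^ ((ℓ : ℝ)/2) := by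
        rw [hspow]; ring

end SFPF

theorem sum_fixed_point_free_pow_le (ℓ : ℕ) (hℓ : 1 ≤ ℓ) (x : ℝ)
    (hx : 16 * (ℓ : ℝ) ^ ((3 : ℝ)/2) ≤ x) :
    ∑ σ ∈ Finset.univ.filter (fun σ : Equiv.Perm (Fin ℓ) => ∀ i, σ i ≠ i),
      x ^ (cycleCount σ) ≤
      Real.exp ((ℓ : ℝ) ^ ((3 : ℝ)/4)) * (Nat.doubleFactorial ℓ) * x ^ ((ℓ : ℝ)/2) := by
  have := SFPF.analytic_bound ℓ hℓ x hx (fun n => SFPF.S n x) (SFPF.S_zero x) (SFPF.S_one x)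
    (fun n => SFPF.S_rec n x)
  exact this
end

section
/- Suppose x ≥ 16ℓ^{3/2} is real and ℓ ≥ 1. Then Σ_{π} x^{|π|} ≤ exp(ℓ^{3/4})·ℓ!!·x^{ℓ/2}, where the sum is over set partitions π of {1,...,ℓ} all of whose blocks have size at least 2. -/
open scoped Classical

/-- `P` is a partition of the finite set `Fin n` into nonempty blocks. -/
def IsSetPartition {n : ℕ} (P : Finset (Finset (Fin n))) : Prop :=
  ∅ ∉ P ∧ ∀ i : Fin n, ∃! S, S ∈ P ∧ i ∈ S

namespace SumPartitionsAux

open Finset Nat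

variable {α : Type*} [Fintype α] [DecidableEq α]

/-- Partitions of `s` into exactly `k` blocks, each of size at least 2. -/
noncomputable def PSet (s : Finset α) (k : ℕ) : Finset (Finset (Finset α)) :=
  univ.filter (fun P =>
    (∀ T ∈ P, T ⊆ s ∧ 2 ≤ T.card) ∧ (∀ i ∈ s, ∃! T, T ∈ P ∧ i ∈ T) ∧ P.card = k)

lemma mem_PSet {s : Finset α} {k : ℕ} {P : Finset (Finset α)} :
    P ∈ PSet s k ↔
      (∀ T ∈ P, T ⊆ s ∧ 2 ≤ T.card) ∧ (∀ i ∈ s, ∃! T, T ∈ P ∧ i ∈ T) ∧ P.card = k := by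
  simp [PSet]

lemma card_eq_sum_blocks {s : Finset α} {k : ℕ} {P : Finset (Finset α)}
    (hP : P ∈ PSet s k) : s.card = ∑ T ∈ P, T.card := by
  obtain ⟨hsub, hcov, -⟩ := mem_PSet.1 hP
  have hbU : P.biUnion id = s := by
    apply subset_antisymm
    · intro i hi
      simp only [mem_biUnion, id] at hi
      obtain ⟨T, hT, hiT⟩ := hi
      exact (hsub T hT).1 hiT
    · intro i hi
      obtain ⟨T, ⟨hTP, hiT⟩, -⟩ := hcov i hi
      simp only [mem_biUnion, id]
      exact ⟨T, hTP, hiT⟩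
  have hdisj : ∀ T1 ∈ P, ∀ T2 ∈ P, T1 ≠ T2 → Disjoint T1 T2 := by
    intro T1 h1 T2 h2 hne
    rw [Finset.disjoint_left]
    intro i hi1 hi2
    have his : i ∈ s := (hsub T1 h1).1 hi1
    obtain ⟨T, -, huniq⟩ := hcov i his
    exact hne ((huniq T1 ⟨h1, hi1⟩).trans (huniq T2 ⟨h2, hi2⟩).symm)
  rw [← hbU]
  exact Finset.card_biUnion hdisj

lemma two_mul_card_le {s : Finset α} {k : ℕ} {P : Finset (Finset α)}
    (hP : P ∈ PSet s k) : 2 * k ≤ s.card := by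
  obtain ⟨hsub, -, hcard⟩ := mem_PSet.1 hP
  calc 2 * k = ∑ _T ∈ P, 2 := by rw [Finset.sum_const, hcard, smul_eq_mul, mul_comm]
  _ ≤ ∑ T ∈ P, T.card := Finset.sum_le_sum (fun T hT => (hsub T hT).2)
  _ = s.card := (card_eq_sum_blocks hP).symm

lemma PSet_eq_empty {s : Finset α} {k : ℕ} (h : s.card < 2 * k) : PSet s k = ∅ := by
  apply Finset.eq_empty_of_forall_notMem
  intro P hP
  exact absurd (two_mul_card_le hP) (by omega)

lemma PSet_zero {s : Finset α} (hs : s.Nonempty) : PSet s 0 = ∅ := by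
  apply Finset.eq_empty_of_forall_notMem
  intro P hP
  obtain ⟨-, hcov, hcard⟩ := mem_PSet.1 hP
  obtain ⟨i, hi⟩ := hs
  obtain ⟨T, ⟨hTP, -⟩, -⟩ := hcov i hi
  rw [Finset.card_eq_zero.1 hcard] at hTP
  exact absurd hTP (Finset.notMem_empty T)

/-- The bound `n! k^(n-2k) / (2^k k! (n-2k)!)`. -/
noncomputable def Bnd (n k : ℕ) : ℝ :=
  if 2 * k ≤ n then
    (n ! : ℝ) * (k : ℝ) ^ (n - 2 * k) / ((2 : ℝ) ^ k * (k ! : ℝ) * ((n - 2 * k)! : ℝ))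
  else 0

lemma Bnd_nonneg (n k : ℕ) : 0 ≤ Bnd n k := by
  unfold Bnd
  split
  · positivity
  · exact le_refl 0

/-- Key numeric lemma for the induction step. -/
lemma key_sum {n k : ℕ} (hk : 1 ≤ k) (hn : 2 * k ≤ n) :
    ∑ j ∈ Finset.Icc 2 n, ((n - 1).choose (j - 1) : ℝ) * Bnd (n - j) (k - 1) ≤ Bnd n k := by
  set r := n - 2 * k with hr
  have hsub : Finset.Icc 2 (r + 2) ⊆ Finset.Icc 2 n := by
    apply Finset.Icc_subset_Icc_right; omega
  have hzero : ∀ j ∈ Finset.Icc 2 n, j ∉ Finset.Icc 2 (r + 2) →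
      ((n - 1).choose (j - 1) : ℝ) * Bnd (n - j) (k - 1) = 0 := by
    intro j hj hj'
    simp only [Finset.mem_Icc] at hj hj'
    have h1 : ¬ (2 * (k - 1) ≤ n - j) := by omega
    rw [Bnd, if_neg h1, mul_zero]
  rw [← Finset.sum_subset hsub hzero]
  rw [show Finset.Icc 2 (r + 2) = Finset.Ico 2 (r + 3) from by
    rw [← Finset.Ico_add_one_right_eq_Icc]; rfl]
  rw [Finset.sum_Ico_eq_sum_range]
  have hrr : r + 3 - 2 = r + 1 := by omega
  rw [hrr]
  have hterm : ∀ m ∈ Finset.range (r + 1),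
      ((n - 1).choose (2 + m - 1) : ℝ) * Bnd (n - (2 + m)) (k - 1)
        ≤ ((n - 1)! : ℝ) / ((2 : ℝ) ^ (k - 1) * ((k - 1)! : ℝ))
            * (((k - 1 : ℕ) : ℝ) ^ (r - m) / ((m ! : ℝ) * ((r - m)! : ℝ))) := by
    intro m hm
    rw [Finset.mem_range] at hm
    have hm' : m ≤ r := by omega
    have e1 : 2 + m - 1 = m + 1 := by omega
    have e2 : 2 * (k - 1) ≤ n - (2 + m) := by omega
    have e3 : (n - (2 + m)) - 2 * (k - 1) = r - m := by omega
    rw [e1, Bnd, if_pos e2, e3]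
    have hchoose : ((n - 1).choose (m + 1) : ℝ)
        = ((n - 1)! : ℝ) / (((m + 1)! : ℝ) * (((n - 1) - (m + 1))! : ℝ)) := by
      exact_mod_cast Nat.cast_choose ℝ (show m + 1 ≤ n - 1 by omega)
    have e4 : (n - 1) - (m + 1) = n - (2 + m) := by omega
    rw [hchoose, e4]
    have hfle : ((m !:ℕ) : ℝ) ≤ (((m+1)! : ℕ) : ℝ) :=
      Nat.cast_le.2 (Nat.factorial_le (by omega))
    rw [_root_.div_mul_div_comm, _root_.div_mul_div_comm,
      div_le_div_iff₀ (by positivity) (by positivity)]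
    calc ((n-1)! : ℝ) * (((n - (2+m))! : ℝ) * ((k-1:ℕ):ℝ)^(r-m))
          * ((2:ℝ)^(k-1) * ((k-1)! : ℝ) * ((m !:ℝ) * ((r-m)! : ℝ)))
        = (((n-1)! : ℝ) * ((n - (2+m))! :ℝ) * ((k-1:ℕ):ℝ)^(r-m)
            * ((2:ℝ)^(k-1) * ((k-1)! : ℝ) * ((r-m)! : ℝ))) * (m ! : ℝ) := by ring
      _ ≤ (((n-1)! : ℝ) * ((n - (2+m))! :ℝ) * ((k-1:ℕ):ℝ)^(r-m)
            * ((2:ℝ)^(k-1) * ((k-1)! : ℝ) * ((r-m)! : ℝ))) * ((m+1)! : ℝ) := by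
          apply mul_le_mul_of_nonneg_left hfle (by positivity)
      _ = ((n-1)! : ℝ) * ((k-1:ℕ):ℝ)^(r-m)
            * (((m+1)! : ℝ) * ((n - (2+m))! : ℝ)
              * ((2:ℝ)^(k-1) * ((k-1)! : ℝ) * ((r-m)! : ℝ))) := by ring
  have hsum : ∑ m ∈ Finset.range (r+1),
      ((k-1:ℕ):ℝ)^(r-m) / ((m ! : ℝ) * ((r-m)! : ℝ)) = (k:ℝ)^r / (r ! : ℝ) := by
    rw [eq_div_iff (by positivity : ((r ! : ℕ):ℝ) ≠ 0), Finset.sum_mul]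
    have hb : ∀ m ∈ Finset.range (r+1),
        ((k-1:ℕ):ℝ)^(r-m) / ((m ! : ℝ) * ((r-m)! : ℝ)) * (r ! : ℝ)
          = (1:ℝ)^m * ((k-1:ℕ):ℝ)^(r-m) * (r.choose m : ℝ) := by
      intro m hm
      rw [Finset.mem_range] at hm
      rw [Nat.cast_choose ℝ (show m ≤ r by omega)]
      rw [one_pow, one_mul]
      field_simp
    rw [Finset.sum_congr rfl hb, ← add_pow (1:ℝ) ((k-1:ℕ):ℝ) r]
    have : (1:ℝ) + ((k-1:ℕ):ℝ) = (k:ℝ) := by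
      have : ((k-1:ℕ):ℝ) = (k:ℝ) - 1 := by
        push_cast [Nat.cast_sub hk]
        ring
      rw [this]; ring
    rw [this]
  calc ∑ m ∈ Finset.range (r+1), ((n-1).choose (2+m-1) : ℝ) * Bnd (n-(2+m)) (k-1)
      ≤ ∑ m ∈ Finset.range (r+1), ((n-1)! : ℝ) / ((2:ℝ)^(k-1) * ((k-1)! : ℝ))
          * (((k-1:ℕ):ℝ)^(r-m) / ((m ! : ℝ) * ((r-m)! : ℝ))) := Finset.sum_le_sum hterm
    _ = ((n-1)! : ℝ) / ((2:ℝ)^(k-1) * ((k-1)! : ℝ)) * ((k:ℝ)^r / (r ! : ℝ)) := by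
        rw [← Finset.mul_sum, hsum]
    _ ≤ Bnd n k := by
        rw [Bnd, if_pos hn, ← hr, _root_.div_mul_div_comm,
          div_le_div_iff₀ (by positivity) (by positivity)]
        have hnat : ((n-1)! * k^r) * (2^k * k ! * r !)
            ≤ (n ! * k^r) * (2^(k-1) * (k-1)! * r !) := by
          have h2 : (2:ℕ)^k = 2^(k-1) * 2 := by
            conv_lhs => rw [show k = (k-1)+1 by omega]
            rw [pow_succ]
          have h3 : k ! = k * (k-1)! := (Nat.mul_factorial_pred (by omega)).symm
          have h4 : n ! = n * (n-1)! := (Nat.mul_factorial_pred (by omega)).symm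
          rw [h2, h3, h4]
          calc (n-1)! * k^r * (2^(k-1) * 2 * (k * (k-1)!) * r !)
              = (2*k) * ((n-1)! * k^r * (2^(k-1) * (k-1)! * r !)) := by ring
            _ ≤ n * ((n-1)! * k^r * (2^(k-1) * (k-1)! * r !)) :=
                Nat.mul_le_mul_right _ hn
            _ = n * (n-1)! * k^r * (2^(k-1) * (k-1)! * r !) := by ring
        exact_mod_cast hnat

lemma dfac_le_dfac_succ : ∀ n : ℕ, n‼ ≤ (n+1)‼
  | 0 => le_refl 1
  | 1 => one_le_two
  | (n+2) => by
      rw [Nat.doubleFactorial_add_two, show n+2+1 = (n+1)+2 from rfl,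
        Nat.doubleFactorial_add_two]
      exact Nat.mul_le_mul (by omega) (dfac_le_dfac_succ n)

lemma sq_dfac (r k : ℕ) : ((2*k + r - 1)‼)^2 ≤ (2^k * k !)^2 * (2*k + r)^r := by
  induction r using Nat.twoStepInduction generalizing k with
  | zero =>
    simp only [Nat.add_zero, pow_zero, mul_one]
    have h1 : (2*k - 1)‼ ≤ (2*k)‼ := by
      rcases Nat.eq_zero_or_pos k with rfl | hk
      · simp
      · calc (2*k-1)‼ ≤ ((2*k-1)+1)‼ := dfac_le_dfac_succ _
          _ = (2*k)‼ := by congr 1; omega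
    rw [Nat.doubleFactorial_two_mul] at h1
    exact Nat.pow_le_pow_left h1 2
  | one =>
    have e : 2*k + 1 - 1 = 2*k := by omega
    rw [e, Nat.doubleFactorial_two_mul, pow_one]
    exact Nat.le_mul_of_pos_right _ (by omega)
  | more r ih _ =>
    rcases Nat.eq_zero_or_pos (2*k + r) with h0 | hpos
    · have hk : k = 0 := by omega
      have hrr : r = 0 := by omega
      subst hk; subst hrr
      simp [Nat.doubleFactorial]
    · have e1 : 2*k + (r+2) - 1 = (2*k + r - 1) + 2 := by omega
      have e2 : 2*k + r - 1 + 2 = 2*k + r + 1 := by omega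
      rw [e1, Nat.doubleFactorial_add_two, e2, mul_pow]
      calc (2*k+r+1)^2 * ((2*k+r-1)‼)^2
          ≤ (2*k+r+1)^2 * ((2^k * k !)^2 * (2*k+r)^r) :=
            Nat.mul_le_mul_left _ (ih k)
        _ ≤ (2*k+(r+2))^2 * ((2^k * k !)^2 * (2*k+(r+2))^r) :=
            Nat.mul_le_mul (Nat.pow_le_pow_left (by omega) 2)
              (Nat.mul_le_mul_left _ (Nat.pow_le_pow_left (by omega) r))
        _ = (2^k * k !)^2 * (2*k+(r+2))^(r+2) := by ring

lemma count_le (s : Finset α) : ∀ k : ℕ, ((PSet s k).card : ℝ) ≤ Bnd s.card k := by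
  induction s using Finset.strongInduction with
  | _ s ih =>
    intro k
    rcases Nat.eq_zero_or_pos k with hk0 | hk1
    · subst hk0
      rcases Finset.eq_empty_or_nonempty s with rfl | hs
      · have hsub : PSet (∅ : Finset α) 0 ⊆ {∅} := by
          intro P hP
          have := (mem_PSet.1 hP).2.2
          simp [Finset.card_eq_zero.1 this]
        have h1 : (PSet (∅ : Finset α) 0).card ≤ 1 :=
          le_trans (Finset.card_le_card hsub) (by simp)
        have hB : Bnd 0 0 = 1 := by norm_num [Bnd]
        rw [Finset.card_empty, hB]
        exact_mod_cast h1
      · rw [PSet_zero hs]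
        simpa using Bnd_nonneg s.card 0
    · by_cases hn : 2*k ≤ s.card
      swap
      · rw [PSet_eq_empty (by omega)]
        simpa using Bnd_nonneg s.card k
      · have hs : s.Nonempty := by
          rw [← Finset.card_pos]; omega
        obtain ⟨a, has⟩ := hs
        set f : Finset (Finset α) → Finset α :=
          fun P => (P.filter (fun T => a ∈ T)).sup id with hf
        set 𝒯 : Finset (Finset α) :=
          s.powerset.filter (fun T => a ∈ T ∧ 2 ≤ T.card) with hT
        have hfP : ∀ P ∈ PSet s k, f P ∈ P ∧ a ∈ f P := by
          intro P hP
          obtain ⟨hsubb, hcov, hcard⟩ := mem_PSet.1 hP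
          obtain ⟨T₀, hT₀, huniq⟩ := hcov a has
          have hfilter : P.filter (fun T => a ∈ T) = {T₀} := by
            ext T
            simp only [Finset.mem_filter, Finset.mem_singleton]
            constructor
            · rintro ⟨h1, h2⟩; exact huniq T ⟨h1, h2⟩
            · rintro rfl; exact ⟨hT₀.1, hT₀.2⟩
          have hfeq : f P = T₀ := by rw [hf]; simp [hfilter]
          rw [hfeq]; exact ⟨hT₀.1, hT₀.2⟩
        have hmaps : ∀ P ∈ PSet s k, f P ∈ 𝒯 := by
          intro P hP
          obtain ⟨hfP1, hfP2⟩ := hfP P hP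
          obtain ⟨hsubb, -, -⟩ := mem_PSet.1 hP
          rw [hT]
          simp only [Finset.mem_filter, Finset.mem_powerset]
          exact ⟨(hsubb _ hfP1).1, hfP2, (hsubb _ hfP1).2⟩
        have hfib := Finset.card_eq_sum_card_fiberwise hmaps
        have hfiber : ∀ T ∈ 𝒯, ((PSet s k).filter (fun P => f P = T)).card
            ≤ (PSet (s \ T) (k-1)).card := by
          intro T hTmem
          apply Finset.card_le_card_of_injOn (fun P => P.erase T)
          · intro P hP
            simp only [Finset.mem_coe, Finset.mem_filter] at hP
            obtain ⟨hPmem, hfPT⟩ := hP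
            have hTP : T ∈ P := by rw [← hfPT]; exact (hfP P hPmem).1
            obtain ⟨hsubb, hcov, hcard⟩ := mem_PSet.1 hPmem
            rw [Finset.mem_coe, mem_PSet]
            refine ⟨?_, ?_, ?_⟩
            · intro S hS
              have hSP := Finset.mem_of_mem_erase hS
              have hST := Finset.ne_of_mem_erase hS
              refine ⟨?_, (hsubb S hSP).2⟩
              intro i hiS
              rw [Finset.mem_sdiff]
              refine ⟨(hsubb S hSP).1 hiS, ?_⟩
              intro hiT
              obtain ⟨T', -, huniq⟩ := hcov i ((hsubb S hSP).1 hiS)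
              exact hST ((huniq S ⟨hSP, hiS⟩).trans (huniq T ⟨hTP, hiT⟩).symm)
            · intro i hi
              rw [Finset.mem_sdiff] at hi
              obtain ⟨T', ⟨hT'P, hiT'⟩, huniq⟩ := hcov i hi.1
              have hT'T : T' ≠ T := fun h => hi.2 (h ▸ hiT')
              refine ⟨T', ⟨Finset.mem_erase.2 ⟨hT'T, hT'P⟩, hiT'⟩, ?_⟩
              rintro S ⟨hS, hiS⟩
              exact huniq S ⟨Finset.mem_of_mem_erase hS, hiS⟩
            · rw [Finset.card_erase_of_mem hTP, hcard]
          · intro P1 h1 P2 h2 he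
            simp only [Finset.coe_filter, Set.mem_setOf_eq] at h1 h2
            have hT1 : T ∈ P1 := by rw [← h1.2]; exact (hfP P1 h1.1).1
            have hT2 : T ∈ P2 := by rw [← h2.2]; exact (hfP P2 h2.1).1
            rw [← Finset.insert_erase hT1, ← Finset.insert_erase hT2]
            exact congrArg (insert T) he
        have hstep : ((PSet s k).card : ℝ) ≤ ∑ T ∈ 𝒯, Bnd (s.card - T.card) (k-1) := by
          rw [hfib]
          push_cast
          apply Finset.sum_le_sum
          intro T hTmem
          have h1 : (((PSet s k).filter (fun P => f P = T)).card : ℝ)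
              ≤ ((PSet (s \ T) (k-1)).card : ℝ) := by exact_mod_cast hfiber T hTmem
          refine h1.trans ?_
          have hTs : T ⊆ s := Finset.mem_powerset.1 (Finset.mem_filter.1 hTmem).1
          have haT : a ∈ T := ((Finset.mem_filter.1 hTmem).2).1
          have hss : s \ T ⊂ s := Finset.sdiff_ssubset hTs ⟨a, haT⟩
          have h2 := ih (s \ T) hss (k-1)
          rwa [Finset.card_sdiff_of_subset hTs] at h2
        have hgroup : ∑ T ∈ 𝒯, Bnd (s.card - T.card) (k-1)
            = ∑ j ∈ Finset.Icc 2 s.card,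
                ∑ T ∈ 𝒯.filter (fun T => T.card = j), Bnd (s.card - T.card) (k-1) := by
          rw [Finset.sum_fiberwise_of_maps_to]
          intro T hTmem
          rw [Finset.mem_Icc]
          have hTs : T ⊆ s := Finset.mem_powerset.1 (Finset.mem_filter.1 hTmem).1
          exact ⟨(Finset.mem_filter.1 hTmem).2.2, Finset.card_le_card hTs⟩
        have hcount : ∀ j : ℕ, (𝒯.filter (fun T => T.card = j)).card
            ≤ (s.card - 1).choose (j-1) := by
          intro j
          have hpc : ((s.erase a).powersetCard (j-1)).card = (s.card - 1).choose (j-1) := by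
            rw [Finset.card_powersetCard, Finset.card_erase_of_mem has]
          rw [← hpc]
          apply Finset.card_le_card_of_injOn (fun T => T.erase a)
          · intro T hTm
            simp only [Finset.mem_coe, Finset.mem_filter] at hTm
            obtain ⟨hTmem, hcardj⟩ := hTm
            have hTs : T ⊆ s := Finset.mem_powerset.1 (Finset.mem_filter.1 hTmem).1
            have haT : a ∈ T := (Finset.mem_filter.1 hTmem).2.1
            rw [Finset.mem_coe, Finset.mem_powersetCard]
            exact ⟨Finset.erase_subset_erase a hTs,
              by rw [Finset.card_erase_of_mem haT, hcardj]⟩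
          · intro T1 h1 T2 h2 he
            simp only [Finset.coe_filter, Set.mem_setOf_eq] at h1 h2
            have haT1 : a ∈ T1 := (Finset.mem_filter.1 h1.1).2.1
            have haT2 : a ∈ T2 := (Finset.mem_filter.1 h2.1).2.1
            rw [← Finset.insert_erase haT1, ← Finset.insert_erase haT2]
            exact congrArg (insert a) he
        calc ((PSet s k).card : ℝ)
            ≤ ∑ T ∈ 𝒯, Bnd (s.card - T.card) (k-1) := hstep
          _ = ∑ j ∈ Finset.Icc 2 s.card,
                ∑ T ∈ 𝒯.filter (fun T => T.card = j), Bnd (s.card - T.card) (k-1) := hgroup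
          _ ≤ ∑ j ∈ Finset.Icc 2 s.card,
                ((s.card - 1).choose (j-1) : ℝ) * Bnd (s.card - j) (k-1) := by
              apply Finset.sum_le_sum
              intro j hj
              have hinner : ∑ T ∈ 𝒯.filter (fun T => T.card = j),
                  Bnd (s.card - T.card) (k-1)
                  = ((𝒯.filter (fun T => T.card = j)).card : ℝ) * Bnd (s.card - j) (k-1) := by
                rw [Finset.sum_congr rfl (fun T hT => by
                  rw [(Finset.mem_filter.1 hT).2]), Finset.sum_const, nsmul_eq_mul]
              rw [hinner]
              exact mul_le_mul_of_nonneg_right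
                (Nat.cast_le.2 (hcount j)) (Bnd_nonneg _ _)
          _ ≤ Bnd s.card k := key_sum hk1 hn


lemma per_k {l k : ℕ} (hl : 1 ≤ l) (hk : 2*k ≤ l) {x : ℝ}
    (hx : 16 * (l:ℝ) ^ ((3:ℝ)/2) ≤ x) :
    Bnd l k * x^k ≤ ((l‼ : ℕ) : ℝ) * x ^ ((l:ℝ)/2)
      * (((l:ℝ) ^ ((3:ℝ)/4) / 8) ^ (l - 2*k) / (((l - 2*k)! : ℕ) : ℝ)) := by
  have ha0 : (0:ℝ) < (l:ℝ) := by exact_mod_cast hl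
  have hx0 : (0:ℝ) < x := lt_of_lt_of_le (by positivity) hx
  set r := l - 2*k with hrdef
  set b : ℝ := (l:ℝ) ^ ((1:ℝ)/2) with hbdef
  set c : ℝ := x ^ ((1:ℝ)/2) with hcdef
  set y : ℝ := (l:ℝ) ^ ((3:ℝ)/4) / 8 with hydef
  have hb0 : 0 ≤ b := Real.rpow_nonneg ha0.le _
  have hc0 : 0 ≤ c := Real.rpow_nonneg hx0.le _
  have hy0 : 0 ≤ y := by positivity
  have hb2 : b ^ (2:ℕ) = (l:ℝ) := by
    rw [hbdef, ← Real.rpow_natCast ((l:ℝ) ^ ((1:ℝ)/2)) 2, ← Real.rpow_mul ha0.le]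
    norm_num
  -- double factorial bound
  have hdf : (((l-1)‼ : ℕ) : ℝ) ≤ (2:ℝ)^k * (k ! : ℝ) * b^r := by
    have hnat := sq_dfac r k
    have he : 2*k + r = l := by omega
    rw [he] at hnat
    have hcast : ((((l-1)‼ : ℕ) : ℝ))^(2:ℕ)
        ≤ ((2:ℝ)^k * (k ! : ℝ) * b^r)^(2:ℕ) := by
      have h1 : ((((l-1)‼ : ℕ) : ℝ))^(2:ℕ)
          ≤ (((2^k * k ! : ℕ) : ℝ))^(2:ℕ) * ((l:ℝ))^r := by
        exact_mod_cast hnat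
      refine h1.trans_eq ?_
      push_cast
      rw [← hb2]
      ring
    have hA : (0:ℝ) ≤ (((l-1)‼ : ℕ) : ℝ) := by positivity
    have hB : (0:ℝ) ≤ (2:ℝ)^k * (k ! : ℝ) * b^r := by positivity
    nlinarith [hcast, hA, hB]
  -- split x^(l/2)
  have hxsplit : x ^ ((l:ℝ)/2) = x^k * c^r := by
    have hl2 : (l:ℝ) = 2*(k:ℝ) + (r:ℝ) := by
      have : l = 2*k + r := by omega
      exact_mod_cast congrArg (Nat.cast (R := ℝ)) this
    have h1 : (l:ℝ)/2 = (k:ℝ) + ((1:ℝ)/2) * (r:ℝ) := by rw [hl2]; ring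
    rw [h1, Real.rpow_add hx0, Real.rpow_natCast]
    congr 1
    rw [hcdef, ← Real.rpow_natCast (x ^ ((1:ℝ)/2)) r, ← Real.rpow_mul hx0.le]
  -- c ≥ 4 a^(3/4)
  have hc4 : 4 * (l:ℝ) ^ ((3:ℝ)/4) ≤ c := by
    have h16 : ((16:ℝ) * (l:ℝ) ^ ((3:ℝ)/2)) ^ ((1:ℝ)/2) ≤ c := by
      rw [hcdef]
      exact Real.rpow_le_rpow (by positivity) hx (by norm_num)
    refine le_trans (le_of_eq ?_) h16
    rw [Real.mul_rpow (by norm_num) (by positivity)]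
    congr 1
    · rw [show (16:ℝ) = (4:ℝ)^(2:ℕ) by norm_num, ← Real.rpow_natCast (4:ℝ) 2,
        ← Real.rpow_mul (by norm_num : (0:ℝ) ≤ 4)]
      norm_num
    · rw [← Real.rpow_mul ha0.le]
      norm_num
  -- b k ≤ c y
  have hbk : b * (k:ℝ) ≤ c * y := by
    have hkl : (k:ℝ) ≤ (l:ℝ)/2 := by
      have : (2*k : ℕ) ≤ l := hk
      have h := (Nat.cast_le (α := ℝ)).2 this
      push_cast at h
      linarith
    have h1 : b * (k:ℝ) ≤ b * ((l:ℝ)/2) := by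
      apply mul_le_mul_of_nonneg_left hkl hb0
    have hsplit32 : (l:ℝ) ^ ((3:ℝ)/2) = (l:ℝ) ^ ((1:ℝ)/2) * (l:ℝ) ^ (1:ℝ) := by
      rw [← Real.rpow_add ha0]; norm_num
    rw [Real.rpow_one] at hsplit32
    have h2 : b * ((l:ℝ)/2) = (l:ℝ) ^ ((3:ℝ)/2) / 2 := by
      rw [hbdef, hsplit32]; ring
    have h3 : (l:ℝ) ^ ((3:ℝ)/2) / 2 ≤ c * y := by
      have h4 : (4 * (l:ℝ) ^ ((3:ℝ)/4)) * y ≤ c * y :=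
        mul_le_mul_of_nonneg_right hc4 hy0
      have hll : (l:ℝ) ^ ((3:ℝ)/4) * (l:ℝ) ^ ((3:ℝ)/4) = (l:ℝ) ^ ((3:ℝ)/2) := by
        rw [← Real.rpow_add ha0]; norm_num
      have h5 : (4 * (l:ℝ) ^ ((3:ℝ)/4)) * y = (l:ℝ) ^ ((3:ℝ)/2) / 2 := by
        rw [hydef]
        linear_combination (1/2) * hll
      linarith
    linarith
  -- main chain
  rw [Bnd, if_pos hk, ← hrdef]
  have hfac : (l ! : ℝ) = ((l‼ : ℕ) : ℝ) * (((l-1)‼ : ℕ) : ℝ) := by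
    have h1 : (l-1) + 1 = l := by omega
    have h2 := Nat.factorial_eq_mul_doubleFactorial (l-1)
    rw [h1] at h2
    exact_mod_cast congrArg (Nat.cast (R := ℝ)) h2
  have hK : (0:ℝ) < (2:ℝ)^k * (k ! : ℝ) := by positivity
  have hR : (0:ℝ) < ((r ! : ℕ) : ℝ) := by positivity
  calc (l ! : ℝ) * (k:ℝ)^r / ((2:ℝ)^k * (k ! : ℝ) * ((r ! : ℕ) : ℝ)) * x^k
      ≤ ((l‼ : ℕ) : ℝ) * ((2:ℝ)^k * (k ! : ℝ) * b^r) * (k:ℝ)^r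
          / ((2:ℝ)^k * (k ! : ℝ) * ((r ! : ℕ) : ℝ)) * x^k := by
        have hnum : (l ! : ℝ) ≤ ((l‼ : ℕ) : ℝ) * ((2:ℝ)^k * (k ! : ℝ) * b^r) := by
          rw [hfac]
          exact mul_le_mul_of_nonneg_left hdf (by positivity)
        gcongr
    _ = ((l‼ : ℕ) : ℝ) * ((b * (k:ℝ))^r * x^k) / ((r ! : ℕ) : ℝ) := by
        rw [mul_pow]
        field_simp
    _ ≤ ((l‼ : ℕ) : ℝ) * ((c * y)^r * x^k) / ((r ! : ℕ) : ℝ) := by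
        gcongr ((l‼:ℕ):ℝ) * (?_ * x^k) / ((r ! : ℕ) : ℝ)
        exact pow_le_pow_left₀ (by positivity) hbk r
    _ = ((l‼ : ℕ) : ℝ) * x ^ ((l:ℝ)/2) * (y^r / ((r ! : ℕ) : ℝ)) := by
        rw [hxsplit, mul_pow]
        ring

lemma sum_G_le (l : ℕ) {y : ℝ} (hy : 0 ≤ y) :
    ∑ k ∈ Finset.range (l+1),
      (if 2*k ≤ l then y^(l-2*k) / (((l-2*k)! : ℕ) : ℝ) else 0) ≤ Real.exp y := by
  rw [← Finset.sum_filter]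
  set S := (Finset.range (l+1)).filter (fun k => 2*k ≤ l) with hS
  have hinj : Set.InjOn (fun k => l - 2*k) S := by
    intro k1 h1 k2 h2 he
    simp only [hS, Finset.coe_filter, Set.mem_setOf_eq, Finset.mem_range] at h1 h2
    simp only at he
    omega
  have himg : ∑ k ∈ S, y^(l-2*k) / (((l-2*k)! : ℕ) : ℝ)
      = ∑ m ∈ S.image (fun k => l - 2*k), y^m / ((m ! : ℕ) : ℝ) := by
    rw [Finset.sum_image (fun k1 h1 k2 h2 => hinj h1 h2)]
  rw [himg]
  have hsub : S.image (fun k => l - 2*k) ⊆ Finset.range (l+1) := by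
    intro m hm
    simp only [Finset.mem_image] at hm
    obtain ⟨k, -, rfl⟩ := hm
    rw [Finset.mem_range]; omega
  calc ∑ m ∈ S.image (fun k => l - 2*k), y^m / ((m ! : ℕ) : ℝ)
      ≤ ∑ m ∈ Finset.range (l+1), y^m / ((m ! : ℕ) : ℝ) := by
        apply Finset.sum_le_sum_of_subset_of_nonneg hsub
        intro m _ _
        positivity
    _ ≤ Real.exp y := Real.sum_le_exp_of_nonneg hy (l+1)

end SumPartitionsAux

theorem sum_partitions_min_two_pow_le (ℓ : ℕ) (hℓ : 1 ≤ ℓ) (x : ℝ)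
    (hx : 16 * (ℓ : ℝ) ^ ((3 : ℝ)/2) ≤ x) :
    ∑ P ∈ Finset.univ.filter
        (fun P : Finset (Finset (Fin ℓ)) => IsSetPartition P ∧ ∀ S ∈ P, 2 ≤ S.card),
      x ^ P.card ≤
      Real.exp ((ℓ : ℝ) ^ ((3 : ℝ)/4)) * (Nat.doubleFactorial ℓ) * x ^ ((ℓ : ℝ)/2) := by
  classical
  have hl0 : (0:ℝ) < (ℓ:ℝ) := by exact_mod_cast hℓ
  have hx0 : (0:ℝ) < x := by
    refine lt_of_lt_of_le ?_ hx
    have := Real.rpow_pos_of_pos hl0 ((3:ℝ)/2)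
    linarith
  set F := Finset.univ.filter
      (fun P : Finset (Finset (Fin ℓ)) => IsSetPartition P ∧ ∀ S ∈ P, 2 ≤ S.card) with hF
  have hFk : ∀ k : ℕ, F.filter (fun P => P.card = k)
      = SumPartitionsAux.PSet (Finset.univ : Finset (Fin ℓ)) k := by
    intro k
    ext P
    rw [Finset.mem_filter, SumPartitionsAux.mem_PSet, hF, Finset.mem_filter]
    constructor
    · rintro ⟨⟨-, ⟨hne, hcov⟩, hsz⟩, hcard⟩
      exact ⟨fun T hT => ⟨Finset.subset_univ T, hsz T hT⟩, fun i _ => hcov i, hcard⟩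
    · rintro ⟨hsub, hcov, hcard⟩
      refine ⟨⟨Finset.mem_univ P, ⟨?_, fun i => hcov i (Finset.mem_univ i)⟩,
        fun T hT => (hsub T hT).2⟩, hcard⟩
      intro hmem
      have h2 := (hsub ∅ hmem).2
      simp at h2
  have hmaps : ∀ P ∈ F, P.card ∈ Finset.range (ℓ+1) := by
    intro P hP
    have hPmem : P ∈ SumPartitionsAux.PSet (Finset.univ : Finset (Fin ℓ)) P.card := by
      rw [← hFk P.card]
      exact Finset.mem_filter.2 ⟨hP, rfl⟩
    have h2 := SumPartitionsAux.two_mul_card_le hPmem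
    rw [Finset.card_univ, Fintype.card_fin] at h2
    rw [Finset.mem_range]; omega
  rw [← Finset.sum_fiberwise_of_maps_to hmaps (fun P => x ^ P.card)]
  have hinner : ∀ k : ℕ, ∑ P ∈ F.filter (fun P => P.card = k), x ^ P.card
      = ((SumPartitionsAux.PSet (Finset.univ : Finset (Fin ℓ)) k).card : ℝ) * x ^ k := by
    intro k
    rw [Finset.sum_congr rfl (fun P hP => by rw [(Finset.mem_filter.1 hP).2]),
      Finset.sum_const, nsmul_eq_mul, hFk]
  calc ∑ k ∈ Finset.range (ℓ+1), ∑ P ∈ F.filter (fun P => P.card = k), x ^ P.card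
      = ∑ k ∈ Finset.range (ℓ+1),
          ((SumPartitionsAux.PSet (Finset.univ : Finset (Fin ℓ)) k).card : ℝ) * x ^ k := by
        exact Finset.sum_congr rfl (fun k _ => hinner k)
    _ ≤ ∑ k ∈ Finset.range (ℓ+1), SumPartitionsAux.Bnd ℓ k * x ^ k := by
        apply Finset.sum_le_sum
        intro k _
        apply mul_le_mul_of_nonneg_right _ (by positivity)
        have h1 := SumPartitionsAux.count_le (Finset.univ : Finset (Fin ℓ)) k
        rwa [Finset.card_univ, Fintype.card_fin] at h1
    _ ≤ ∑ k ∈ Finset.range (ℓ+1), (Nat.doubleFactorial ℓ : ℝ) * x ^ ((ℓ:ℝ)/2)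
          * (if 2*k ≤ ℓ then ((ℓ:ℝ) ^ ((3:ℝ)/4) / 8) ^ (ℓ - 2*k)
              / (Nat.factorial (ℓ - 2*k) : ℝ) else 0) := by
        apply Finset.sum_le_sum
        intro k _
        by_cases hk : 2*k ≤ ℓ
        · rw [if_pos hk]
          exact SumPartitionsAux.per_k hℓ hk hx
        · rw [if_neg hk, SumPartitionsAux.Bnd, if_neg hk, zero_mul, mul_zero]
    _ = (Nat.doubleFactorial ℓ : ℝ) * x ^ ((ℓ:ℝ)/2)
          * ∑ k ∈ Finset.range (ℓ+1),
            (if 2*k ≤ ℓ then ((ℓ:ℝ) ^ ((3:ℝ)/4) / 8) ^ (ℓ - 2*k)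
              / (Nat.factorial (ℓ - 2*k) : ℝ) else 0) := by
        rw [Finset.mul_sum]
    _ ≤ (Nat.doubleFactorial ℓ : ℝ) * x ^ ((ℓ:ℝ)/2) * Real.exp ((ℓ:ℝ) ^ ((3:ℝ)/4) / 8) := by
        apply mul_le_mul_of_nonneg_left _ (by positivity)
        exact SumPartitionsAux.sum_G_le ℓ (by positivity)
    _ ≤ Real.exp ((ℓ : ℝ) ^ ((3 : ℝ)/4)) * (Nat.doubleFactorial ℓ : ℝ) * x ^ ((ℓ : ℝ)/2) := by
        have hexp : Real.exp ((ℓ:ℝ) ^ ((3:ℝ)/4) / 8) ≤ Real.exp ((ℓ:ℝ) ^ ((3:ℝ)/4)) := by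
          apply Real.exp_le_exp.2
          have h0 : (0:ℝ) ≤ (ℓ:ℝ) ^ ((3:ℝ)/4) := by positivity
          linarith
        have h1 : (0:ℝ) ≤ (Nat.doubleFactorial ℓ : ℝ) * x ^ ((ℓ:ℝ)/2) := by positivity
        calc (Nat.doubleFactorial ℓ : ℝ) * x ^ ((ℓ:ℝ)/2) * Real.exp ((ℓ:ℝ) ^ ((3:ℝ)/4) / 8)
            ≤ (Nat.doubleFactorial ℓ : ℝ) * x ^ ((ℓ:ℝ)/2) * Real.exp ((ℓ:ℝ) ^ ((3:ℝ)/4)) :=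
              mul_le_mul_of_nonneg_left hexp h1
          _ = Real.exp ((ℓ : ℝ) ^ ((3 : ℝ)/4)) * (Nat.doubleFactorial ℓ : ℝ)
              * x ^ ((ℓ : ℝ)/2) := by ring
end

section
/- For any permutation σ ∈ S_k and real x > 2k², Σ_{ρ} x^{-|σρ⁻¹|} ≤ 2·((k-1)!/(k - c(σ) + 1)!)·k^{c(σ)}·x^{-c(σ)+1}, where the sum is over all k-cycles ρ ∈ S_k, |·| is the Cayley weight, and c(σ) is the number of cycles of σ. -/
open scoped Classical

/-- The Cayley weight of a permutation: the minimum number of transpositions whose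
product equals `σ`. -/
noncomputable def cayleyWeight {k : ℕ} (σ : Equiv.Perm (Fin k)) : ℕ :=
  sInf {m | ∃ l : List (Equiv.Perm (Fin k)),
    l.length = m ∧ (∀ τ ∈ l, τ.IsSwap) ∧ l.prod = σ}

open Equiv

variable {k : ℕ}

def scSetoid (f : Equiv.Perm (Fin k)) : Setoid (Fin k) :=
  ⟨f.SameCycle, ⟨fun x => Equiv.Perm.SameCycle.refl f x, fun h => h.symm, fun h h' => h.trans h'⟩⟩

noncomputable def ncyc (f : Equiv.Perm (Fin k)) : ℕ :=
  Fintype.card (Quotient (scSetoid f))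

lemma sameCycle_iff_exists_pow (f : Equiv.Perm (Fin k)) (x y : Fin k) :
    f.SameCycle x y ↔ ∃ n : ℕ, (f ^ n) x = y := by
  constructor
  · intro h
    obtain ⟨i, _, h⟩ := h.exists_pow_eq'
    exact ⟨i, h⟩
  · rintro ⟨n, h⟩
    exact ⟨n, by simpa using h⟩

lemma pow_swap_mul_eq (f : Equiv.Perm (Fin k)) {a b x : Fin k}
    (ha : ¬ f.SameCycle x a) (hb : ¬ f.SameCycle x b) (n : ℕ) :
    ((Equiv.swap a b * f) ^ n) x = (f ^ n) x := by
  induction n with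
  | zero => rfl
  | succ n ih =>
    rw [pow_succ', pow_succ', Equiv.Perm.mul_apply, Equiv.Perm.mul_apply, ih,
      Equiv.Perm.mul_apply]
    have h1 : f ((f ^ n) x) = (f ^ (n+1)) x := by
      rw [pow_succ', Equiv.Perm.mul_apply]
    rw [h1]
    apply Equiv.swap_apply_of_ne_of_ne
    · intro h; exact ha ((sameCycle_iff_exists_pow f x a).2 ⟨n+1, h⟩)
    · intro h; exact hb ((sameCycle_iff_exists_pow f x b).2 ⟨n+1, h⟩)

lemma sameCycle_swap_mul_iff (f : Equiv.Perm (Fin k)) {a b x : Fin k} (y : Fin k)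
    (ha : ¬ f.SameCycle x a) (hb : ¬ f.SameCycle x b) :
    (Equiv.swap a b * f).SameCycle x y ↔ f.SameCycle x y := by
  rw [sameCycle_iff_exists_pow, sameCycle_iff_exists_pow]
  constructor
  · rintro ⟨n, h⟩; exact ⟨n, by rwa [pow_swap_mul_eq f ha hb] at h⟩
  · rintro ⟨n, h⟩; exact ⟨n, by rwa [pow_swap_mul_eq f ha hb]⟩

lemma sameCycle_swap_mul_of (f : Equiv.Perm (Fin k)) {a b x : Fin k}
    (ha : ¬ f.SameCycle x a) (hb : f.SameCycle x b) :
    (Equiv.swap a b * f).SameCycle x a := by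
  have hex : ∃ n, 0 < n ∧ (f ^ n) x = b := by
    obtain ⟨i, h⟩ := (sameCycle_iff_exists_pow f x b).1 hb
    match i, h with
    | 0, h =>
      refine ⟨orderOf f, orderOf_pos f, ?_⟩
      rw [pow_orderOf_eq_one]; simpa using h
    | (i+1), h => exact ⟨i+1, Nat.succ_pos i, h⟩
  classical
  let m := Nat.find hex
  have hm : 0 < m ∧ (f ^ m) x = b := Nat.find_spec hex
  have key : ∀ j, j < m → ((Equiv.swap a b * f) ^ j) x = (f ^ j) x := by
    intro j hj
    induction j with
    | zero => rfl
    | succ j ih =>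
      rw [pow_succ', Equiv.Perm.mul_apply, ih (Nat.lt_of_succ_lt hj), Equiv.Perm.mul_apply]
      have h1 : f ((f ^ j) x) = (f ^ (j+1)) x := by rw [pow_succ', Equiv.Perm.mul_apply]
      rw [h1]
      apply Equiv.swap_apply_of_ne_of_ne
      · intro h; exact ha ((sameCycle_iff_exists_pow f x a).2 ⟨j+1, h⟩)
      · intro h
        exact Nat.find_min hex hj ⟨Nat.succ_pos j, h⟩
  have hfin : ((Equiv.swap a b * f) ^ m) x = a := by
    have hm1 : m - 1 + 1 = m := Nat.succ_pred_eq_of_pos hm.1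
    rw [← hm1, pow_succ', Equiv.Perm.mul_apply, key (m-1) (by omega), Equiv.Perm.mul_apply]
    have h1 : f ((f ^ (m-1)) x) = (f ^ m) x := by
      rw [← Equiv.Perm.mul_apply, ← pow_succ', hm1]
    rw [h1, hm.2, Equiv.swap_apply_right]
  exact (sameCycle_iff_exists_pow _ x a).2 ⟨m, hfin⟩

lemma ncyc_le_swap_mul (f : Equiv.Perm (Fin k)) (a b : Fin k) :
    ncyc f ≤ ncyc (Equiv.swap a b * f) + 1 := by
  set g := Equiv.swap a b * f with hg
  have wd : ∀ x y : Fin k, f.SameCycle x y →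
      (if f.SameCycle x a then (none : Option (Quotient (scSetoid g)))
        else some (Quotient.mk (scSetoid g) x)) =
      (if f.SameCycle y a then none else some (Quotient.mk (scSetoid g) y)) := by
    intro x y h
    by_cases hxa : f.SameCycle x a
    · have hya : f.SameCycle y a := h.symm.trans hxa
      simp [hxa, hya]
    · have hya : ¬ f.SameCycle y a := fun hy => hxa (h.trans hy)
      simp only [if_neg hxa, if_neg hya, Option.some.injEq]
      apply Quotient.sound
      show g.SameCycle x y
      by_cases hxb : f.SameCycle x b
      · exact (sameCycle_swap_mul_of f hxa hxb).trans
          (sameCycle_swap_mul_of f hya (h.symm.trans hxb)).symm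
      · exact (sameCycle_swap_mul_iff f y hxa hxb).2 h
  let F : Quotient (scSetoid f) → Option (Quotient (scSetoid g)) :=
    Quotient.lift _ wd
  have hinj : Function.Injective F := by
    intro q1 q2
    induction q1 using Quotient.inductionOn with
    | h x =>
    induction q2 using Quotient.inductionOn with
    | h y =>
    intro h
    simp only [F, Quotient.lift_mk] at h
    change (if f.SameCycle x a then (none : Option (Quotient (scSetoid g))) else some (Quotient.mk (scSetoid g) x)) = (if f.SameCycle y a then none else some (Quotient.mk (scSetoid g) y)) at h
    by_cases hxa : f.SameCycle x a <;> by_cases hya : f.SameCycle y a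
    · exact Quotient.sound (hxa.trans hya.symm)
    · simp [hxa, hya] at h
    · simp [hxa, hya] at h
    · simp only [if_neg hxa, if_neg hya, Option.some.injEq] at h
      have hgxy : g.SameCycle x y := Quotient.exact h
      apply Quotient.sound
      show f.SameCycle x y
      by_cases hxb : f.SameCycle x b <;> by_cases hyb : f.SameCycle y b
      · exact hxb.trans hyb.symm
      · exact ((sameCycle_swap_mul_iff f x hya hyb).1 hgxy.symm).symm
      · exact (sameCycle_swap_mul_iff f y hxa hxb).1 hgxy
      · exact (sameCycle_swap_mul_iff f y hxa hxb).1 hgxy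
  calc ncyc f ≤ Fintype.card (Option (Quotient (scSetoid g))) :=
        Fintype.card_le_of_injective F hinj
    _ = ncyc g + 1 := Fintype.card_option



lemma cycleCount_eq_ncyc (f : Equiv.Perm (Fin k)) : cycleCount f = ncyc f := by
  have wd : ∀ x y : Fin k, f.SameCycle x y →
      (if h : x ∈ f.support then
          (Sum.inl ⟨f.cycleOf x, (Equiv.Perm.cycleOf_mem_cycleFactorsFinset_iff).2 h⟩ :
            (↥f.cycleFactorsFinset ⊕ {z : Fin k // z ∉ f.support}))
        else Sum.inr ⟨x, h⟩) =
      (if h : y ∈ f.support then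
          Sum.inl ⟨f.cycleOf y, (Equiv.Perm.cycleOf_mem_cycleFactorsFinset_iff).2 h⟩
        else Sum.inr ⟨y, h⟩) := by
    intro x y h
    by_cases hx : x ∈ f.support
    · have hy : y ∈ f.support := by
        rw [Equiv.Perm.mem_support] at hx ⊢
        exact fun hyy => hx (h.apply_eq_self_iff.2 hyy)
      rw [dif_pos hx, dif_pos hy]
      congr 1
      exact Subtype.ext h.cycleOf_eq
    · have hxy : y = x := by
        obtain ⟨i, hi⟩ := h
        rw [Equiv.Perm.notMem_support] at hx
        rw [← hi, Equiv.Perm.zpow_apply_eq_self_of_apply_eq_self hx]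
      subst hxy
      rfl
  let Φ : Quotient (scSetoid f) → (↥f.cycleFactorsFinset ⊕ {z : Fin k // z ∉ f.support}) :=
    Quotient.lift _ wd
  have hΦ : ∀ z, Φ (Quotient.mk _ z) = (if h : z ∈ f.support then
            (Sum.inl ⟨f.cycleOf z, (Equiv.Perm.cycleOf_mem_cycleFactorsFinset_iff).2 h⟩ :
              (↥f.cycleFactorsFinset ⊕ {z : Fin k // z ∉ f.support}))
          else Sum.inr ⟨z, h⟩) := fun z => rfl
  have hinj : Function.Injective Φ := by
    intro q1 q2
    induction q1 using Quotient.inductionOn with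
    | h x =>
    induction q2 using Quotient.inductionOn with
    | h y =>
    intro h
    simp only [hΦ] at h
    by_cases hx : x ∈ f.support
    · by_cases hy : y ∈ f.support
      · rw [dif_pos hx, dif_pos hy] at h
        apply Quotient.sound
        have hco : f.cycleOf x = f.cycleOf y := congrArg Subtype.val (Sum.inl.inj h)
        show f.SameCycle x y
        have : y ∈ (f.cycleOf y).support :=
          (Equiv.Perm.mem_support_cycleOf_iff).2 ⟨Equiv.Perm.SameCycle.refl f y, hy⟩
        rw [← hco] at this
        exact ((Equiv.Perm.mem_support_cycleOf_iff).1 this).1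
      · rw [dif_pos hx, dif_neg hy] at h
        exact absurd h (by simp)
    · by_cases hy : y ∈ f.support
      · rw [dif_neg hx, dif_pos hy] at h
        exact absurd h (by simp)
      · rw [dif_neg hx, dif_neg hy] at h
        apply Quotient.sound
        have hxy : x = y := congrArg Subtype.val (Sum.inr.inj h)
        rw [hxy]
  have hsurj : Function.Surjective Φ := by
    rintro (⟨γ, hγ⟩ | ⟨x, hx⟩)
    · have hγ' := (Equiv.Perm.mem_cycleFactorsFinset_iff).1 hγ
      obtain ⟨z, hz⟩ := hγ'.1.nonempty_support
      have hzf : z ∈ f.support := by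
        rw [Equiv.Perm.mem_support] at hz ⊢
        rw [← hγ'.2 z (by rwa [Equiv.Perm.mem_support])]
        exact hz
      refine ⟨Quotient.mk _ z, ?_⟩
      simp only [hΦ, dif_pos hzf]
      congr 1
      exact Subtype.ext (Equiv.Perm.cycle_is_cycleOf hz hγ).symm
    · exact ⟨Quotient.mk _ x, by simp only [hΦ, dif_neg hx]⟩
  have hcard := Fintype.card_congr (Equiv.ofBijective Φ ⟨hinj, hsurj⟩)
  rw [Fintype.card_sum, Fintype.card_coe] at hcard
  have h2 : Fintype.card {z : Fin k // z ∉ f.support} = k - f.support.card := by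
    rw [Fintype.card_subtype_compl]
    congr 1
    · simp
    · exact Fintype.card_coe _
  rw [h2] at hcard
  have h3 : Multiset.card f.cycleType = f.cycleFactorsFinset.card := by
    rw [Equiv.Perm.cycleType_def, Multiset.card_map]
    rfl
  unfold cycleCount ncyc
  rw [h3, hcard]


lemma multiset_card_le_sum (s : Multiset ℕ) (h : ∀ x ∈ s, 1 ≤ x) :
    Multiset.card s ≤ s.sum := by
  induction s using Multiset.induction_on with
  | empty => simp
  | cons a s ih =>
    simp only [Multiset.card_cons, Multiset.sum_cons]
    have h1 := h a (by simp)
    have h2 := ih (fun x hx => h x (by simp [hx]))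
    omega

lemma card_cycleType_le_support (f : Equiv.Perm (Fin k)) :
    Multiset.card f.cycleType ≤ f.support.card := by
  rw [← Equiv.Perm.sum_cycleType]
  exact multiset_card_le_sum _ (fun x hx => le_trans (by norm_num) (Equiv.Perm.two_le_of_mem_cycleType hx))

lemma cycle_swap_factors : ∀ (n : ℕ) (γ : Equiv.Perm (Fin k)), γ.IsCycle →
    γ.support.card = n →
    ∃ l : List (Equiv.Perm (Fin k)), (∀ τ ∈ l, τ.IsSwap) ∧ l.prod = γ ∧ l.length = n - 1 := by
  intro n
  induction n using Nat.strong_induction_on with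
  | _ n ih =>
    intro γ hγ hcard
    obtain ⟨x, hx, -⟩ := id hγ
    by_cases h2 : γ (γ x) = x
    · have heq : γ = Equiv.swap x (γ x) := hγ.eq_swap_of_apply_apply_eq_self hx h2
      have hn : n = 2 := by
        rw [← hcard, heq, Equiv.Perm.card_support_swap (Ne.symm hx)]
      refine ⟨[Equiv.swap x (γ x)], ?_, by rw [List.prod_singleton]; exact heq.symm, by simp [hn]⟩
      intro τ hτ
      rw [List.mem_singleton] at hτ
      exact hτ ▸ ⟨x, γ x, Ne.symm hx, rfl⟩
    · have hx' : x ∈ γ.support := Equiv.Perm.mem_support.2 hx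
      have hγ' : (Equiv.swap x (γ x) * γ).IsCycle := hγ.swap_mul hx h2
      have hsupp : (Equiv.swap x (γ x) * γ).support = γ.support \ {x} :=
        Equiv.Perm.support_swap_mul_eq γ x h2
      have hcard' : (Equiv.swap x (γ x) * γ).support.card = n - 1 := by
        rw [hsupp, Finset.card_sdiff_of_subset (Finset.singleton_subset_iff.2 hx'), hcard]
        simp
      have hn2 : 2 ≤ n := by
        rw [← hcard]
        exact hγ.two_le_card_support
      obtain ⟨l, hl1, hl2, hl3⟩ := ih (n-1) (by omega) _ hγ' hcard'
      refine ⟨Equiv.swap x (γ x) :: l, ?_, ?_, ?_⟩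
      · intro τ hτ
        rcases List.mem_cons.1 hτ with h | h
        · exact h ▸ ⟨x, γ x, Ne.symm hx, rfl⟩
        · exact hl1 τ h
      · rw [List.prod_cons, hl2, ← mul_assoc, Equiv.swap_mul_self, one_mul]
      · simp [hl3]; omega


lemma support_card_le (f : Equiv.Perm (Fin k)) : f.support.card ≤ k := by
  have := Finset.card_le_univ f.support
  simpa using this

lemma exists_swap_factors (f : Equiv.Perm (Fin k)) :
    ∃ l : List (Equiv.Perm (Fin k)), (∀ τ ∈ l, τ.IsSwap) ∧ l.prod = f ∧
      l.length = f.support.card - Multiset.card f.cycleType := by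
  induction f using Equiv.Perm.cycle_induction_on with
  | base_one => exact ⟨[], by simp, by simp, by simp⟩
  | base_cycles γ hγ =>
    obtain ⟨l, h1, h2, h3⟩ := cycle_swap_factors γ.support.card γ hγ rfl
    refine ⟨l, h1, h2, ?_⟩
    rw [h3, Equiv.Perm.card_cycleType_eq_one.2 hγ]
  | induction_disjoint σ τ hd _ hσ hτ =>
    obtain ⟨l1, h11, h12, h13⟩ := hσ
    obtain ⟨l2, h21, h22, h23⟩ := hτ
    refine ⟨l1 ++ l2, ?_, ?_, ?_⟩
    · intro x hx
      rcases List.mem_append.1 hx with h | h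
      · exact h11 x h
      · exact h21 x h
    · rw [List.prod_append, h12, h22]
    · rw [List.length_append, h13, h23, hd.card_support_mul, hd.cycleType_mul,
        Multiset.card_add]
      have e1 := card_cycleType_le_support σ
      have e2 := card_cycleType_le_support τ
      omega

lemma k_le_of_swap_list (l : List (Equiv.Perm (Fin k))) (hl : ∀ τ ∈ l, τ.IsSwap) :
    k ≤ cycleCount l.prod + l.length := by
  induction l with
  | nil =>
    simp only [List.prod_nil, List.length_nil, add_zero]
    unfold cycleCount
    simp
  | cons τ l ih =>
    obtain ⟨a, b, hab, rfl⟩ := hl τ List.mem_cons_self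
    have h1 := ih (fun x hx => hl x (List.mem_cons_of_mem _ hx))
    have h2 : cycleCount l.prod ≤ cycleCount (Equiv.swap a b * l.prod) + 1 := by
      rw [cycleCount_eq_ncyc, cycleCount_eq_ncyc]
      exact ncyc_le_swap_mul l.prod a b
    rw [List.prod_cons, List.length_cons]
    omega

lemma cayleyWeight_eq (f : Equiv.Perm (Fin k)) :
    cayleyWeight f = k - cycleCount f := by
  have hsupp := support_card_le f
  have hct := card_cycleType_le_support f
  have hcc : k - cycleCount f = f.support.card - Multiset.card f.cycleType := by
    unfold cycleCount; omega
  apply le_antisymm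
  · obtain ⟨l, h1, h2, h3⟩ := exists_swap_factors f
    rw [hcc]
    exact Nat.sInf_le ⟨l, h3, h1, h2⟩
  · apply le_csInf
    · obtain ⟨l, h1, h2, h3⟩ := exists_swap_factors f
      exact ⟨_, l, h3, h1, h2⟩
    · rintro m ⟨l, hlen, hsw, hprod⟩
      have := k_le_of_swap_list l hsw
      rw [hprod, hlen] at this
      omega

noncomputable def Dset (f : Equiv.Perm (Fin k)) : Finset (Fin k) :=
  Finset.univ.filter (fun i => ∃ j, f.SameCycle i j ∧ j < i)

lemma mem_Dset {f : Equiv.Perm (Fin k)} {i : Fin k} :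
    i ∈ Dset f ↔ ∃ j, f.SameCycle i j ∧ j < i := by
  simp [Dset]

lemma not_mem_Dset {f : Equiv.Perm (Fin k)} {i : Fin k} :
    i ∉ Dset f ↔ ∀ j, f.SameCycle i j → i ≤ j := by
  rw [mem_Dset]
  push_neg
  rfl

lemma card_compl_Dset (f : Equiv.Perm (Fin k)) : (Dset f)ᶜ.card = ncyc f := by
  have key : Fintype.card ↥((Dset f)ᶜ) = Fintype.card (Quotient (scSetoid f)) := by
    apply Fintype.card_of_bijective (f := fun x : ↥((Dset f)ᶜ) => Quotient.mk (scSetoid f) x.val)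
    constructor
    · rintro ⟨x, hx⟩ ⟨y, hy⟩ h
      have hxy : f.SameCycle x y := Quotient.exact h
      rw [Finset.mem_compl] at hx hy
      have h1 := (not_mem_Dset.1 hx) y hxy
      have h2 := (not_mem_Dset.1 hy) x hxy.symm
      exact Subtype.ext (le_antisymm h1 h2)
    · intro q
      induction q using Quotient.inductionOn with
      | h z =>
        have hne : (Finset.univ.filter (f.SameCycle z)).Nonempty :=
          ⟨z, by simp [Equiv.Perm.SameCycle.refl]⟩
        set m := (Finset.univ.filter (f.SameCycle z)).min' hne with hm
        have hmem : f.SameCycle z m := by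
          have := Finset.min'_mem _ hne
          rw [← hm] at this
          simpa using this
        have hmc : m ∈ (Dset f)ᶜ := by
          rw [Finset.mem_compl, not_mem_Dset]
          intro j hj
          apply Finset.min'_le
          simp [hmem.trans hj]
        exact ⟨⟨m, hmc⟩, Quotient.sound hmem.symm⟩
  rw [← Fintype.card_coe]
  unfold ncyc
  exact key

lemma card_Dset (f : Equiv.Perm (Fin k)) : (Dset f).card = k - ncyc f := by
  have h1 := card_compl_Dset f
  have h2 : (Dset f)ᶜ.card = Fintype.card (Fin k) - (Dset f).card := Finset.card_compl _
  rw [Fintype.card_fin] at h2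
  have := Finset.card_le_univ (Dset f)
  simp only [Finset.card_univ, Fintype.card_fin] at this
  omega

lemma ncyc_le_k (f : Equiv.Perm (Fin k)) : ncyc f ≤ k := by
  have h1 := card_compl_Dset f
  have := Finset.card_le_univ ((Dset f)ᶜ)
  simp only [Finset.card_univ, Fintype.card_fin] at this
  omega

lemma recon_aux {f g : Equiv.Perm (Fin k)} (hD : Dset f = Dset g)
    (hfg : ∀ i ∈ Dset f, f i = g i) (m : Fin k) (hm : m ∉ Dset f) (hfm : f m ≠ m) :
    f m = g m := by
  have hmin_f : ∀ j, f.SameCycle m j → m ≤ j := not_mem_Dset.1 hm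
  have hmin_g : ∀ j, g.SameCycle m j → m ≤ j := not_mem_Dset.1 (hD ▸ hm)
  have hmemD : ∀ y, f.SameCycle m y → y ≠ m → y ∈ Dset f := by
    intro y hy hne
    exact mem_Dset.2 ⟨m, hy.symm, lt_of_le_of_ne (hmin_f y hy) (Ne.symm hne)⟩
  have hex : ∃ n, 0 < n ∧ (f ^ n) m = m :=
    ⟨orderOf f, orderOf_pos f, by rw [pow_orderOf_eq_one]; rfl⟩
  set l := Nat.find hex with hldef
  have hl : 0 < l ∧ (f ^ l) m = m := Nat.find_spec hex
  have hchain : ∀ j, j < l → (g ^ j) (f m) = (f ^ (j+1)) m := by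
    intro j hj
    induction j with
    | zero => simp
    | succ j ih =>
      have hj' : j < l := Nat.lt_of_succ_lt hj
      have e1 : (g ^ (j+1)) (f m) = g ((g ^ j) (f m)) := by
        rw [pow_succ', Equiv.Perm.mul_apply]
      rw [e1, ih hj']
      have hyD : (f ^ (j+1)) m ∈ Dset f := by
        apply hmemD
        · exact (sameCycle_iff_exists_pow f m _).2 ⟨j+1, rfl⟩
        · intro hcontra
          exact Nat.find_min hex hj ⟨Nat.succ_pos j, hcontra⟩
      rw [← hfg _ hyD]
      rw [← Equiv.Perm.mul_apply, ← pow_succ']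
  have hgl : (g ^ (l-1)) (f m) = m := by
    have h5 := hchain (l-1) (by omega)
    have h4 : l - 1 + 1 = l := Nat.succ_pred_eq_of_pos hl.1
    rw [h4, hl.2] at h5
    exact h5
  have hgm : g.SameCycle m (f m) :=
    ((sameCycle_iff_exists_pow g (f m) m).2 ⟨l-1, hgl⟩).symm
  set z := g⁻¹ (f m) with hzdef
  have hgz : g z = f m := Equiv.apply_symm_apply g (f m)
  have hscz : g.SameCycle m z := hgm.trans ((sameCycle_iff_exists_pow g z (f m)).2
    ⟨1, by simpa using hgz⟩).symm
  by_cases hz : z ∈ Dset f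
  · have h1 : f z = f m := by rw [hfg z hz]; exact hgz
    have h2 : z = m := f.injective h1
    exact absurd (h2 ▸ hz) hm
  · have hminz : ∀ j, g.SameCycle z j → z ≤ j := not_mem_Dset.1 (hD ▸ hz)
    have h1 : z ≤ m := hminz m hscz.symm
    have h2 : m ≤ z := hmin_g z hscz
    have h3 : z = m := le_antisymm h1 h2
    rw [h3] at hgz
    exact hgz.symm

lemma recon {f g : Equiv.Perm (Fin k)} (hD : Dset f = Dset g)
    (hfg : ∀ i ∈ Dset f, f i = g i) : f = g := by
  apply Equiv.ext
  intro i
  by_cases hi : i ∈ Dset f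
  · exact hfg i hi
  · by_cases h1 : f i = i
    · by_cases h2 : g i = i
      · rw [h1, h2]
      · have h3 := recon_aux hD.symm (fun j hj => (hfg j (hD ▸ hj)).symm) i (hD ▸ hi) h2
        rw [h3, h1]
    · exact recon_aux hD hfg i hi h1

lemma orderIsoOfFin_congr {s t : Finset (Fin k)} (hst : s = t) {d : ℕ}
    (hs : s.card = d) (ht : t.card = d) (j : Fin d) :
    ((s.orderIsoOfFin hs j : s) : Fin k) = ((t.orderIsoOfFin ht j : t) : Fin k) := by
  subst hst
  rfl

lemma card_perm_Dset_le (hk : 0 < k) (d : ℕ) (hd : d ≤ k)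
    (s : Finset (Equiv.Perm (Fin k))) (hs : ∀ π ∈ s, (Dset π).card = d) :
    s.card ≤ (Nat.choose k d) * k ^ d := by
  obtain ⟨T, -, hT⟩ := Finset.exists_subset_card_eq (s := (Finset.univ : Finset (Fin k))) (n := d)
    (by simpa using hd)
  let Θ : Equiv.Perm (Fin k) → ({t : Finset (Fin k) // t.card = d} × (Fin d → Fin k)) :=
    fun π => if h : (Dset π).card = d then
      (⟨Dset π, h⟩, fun j => π (((Dset π).orderIsoOfFin h j : Dset π) : Fin k))
    else (⟨T, hT⟩, fun _ => ⟨0, hk⟩)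
  have hcard : s.card ≤ Fintype.card ({t : Finset (Fin k) // t.card = d} × (Fin d → Fin k)) := by
    rw [← Finset.card_univ]
    apply Finset.card_le_card_of_injOn Θ (fun _ _ => Finset.mem_univ _)
    intro π₁ h1 π₂ h2 hΘ
    have hc1 : (Dset π₁).card = d := hs _ h1
    have hc2 : (Dset π₂).card = d := hs _ h2
    simp only [Θ, dif_pos hc1, dif_pos hc2] at hΘ
    have hD : Dset π₁ = Dset π₂ := congrArg (fun p => p.1.val) hΘ
    have hfun := congrArg Prod.snd hΘ
    apply recon hD
    intro i hi
    set j := ((Dset π₁).orderIsoOfFin hc1).symm ⟨i, hi⟩ with hj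
    have e1 : (((Dset π₁).orderIsoOfFin hc1 j : Dset π₁) : Fin k) = i := by
      rw [hj, OrderIso.apply_symm_apply]
    have e2 := congrFun hfun j
    simp only at e2
    rw [e1] at e2
    rw [← orderIsoOfFin_congr hD hc1 hc2 j, e1] at e2
    exact e2
  rw [Fintype.card_prod, Fintype.card_finset_len, Fintype.card_fun,
    Fintype.card_fin, Fintype.card_fin] at hcard
  exact hcard

lemma NK_ineq (K e : ℕ) (hK : 0 < K) (he : e ≤ K - 1) :
    K ^ (2*e) * (K - e).factorial ≤ e.factorial * ((K-1).factorial * K ^ (e+1)) := by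
  induction e with
  | zero =>
    simp only [Nat.mul_zero, pow_zero, one_mul, Nat.factorial_zero, Nat.sub_zero, pow_one]
    have h1 : K.factorial = K * (K-1).factorial := by
      conv_lhs => rw [show K = (K-1)+1 by omega]
      rw [Nat.factorial_succ, show (K-1)+1 = K by omega]
    rw [h1, Nat.mul_comm]
    simp
  | succ e ih =>
    have he' : e ≤ K - 1 := by omega
    have ihe := ih he'
    have hpos : 0 < K - e := by omega
    apply Nat.le_of_mul_le_mul_right _ hpos
    have lhs_eq : K ^ (2*(e+1)) * (K - (e+1)).factorial * (K - e) =
        K^2 * (K ^ (2*e) * (K - e).factorial) := by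
      have hfe : (K - e).factorial = (K - e) * (K - (e+1)).factorial := by
        have h1 : K - e = (K - (e+1)) + 1 := by omega
        rw [h1, Nat.factorial_succ, ← h1]
      rw [hfe, show 2*(e+1) = 2*e + 2 by ring, pow_add]
      ring
    rw [lhs_eq]
    have hkey : K ≤ (e+1) * (K - e) := by
      have h2 : 1 ≤ K - e := by omega
      have h3 : e * 1 ≤ e * (K - e) := Nat.mul_le_mul_left e h2
      have h4 : (e+1)*(K-e) = e*(K-e) + (K-e) := by ring
      omega
    calc K^2 * (K ^ (2*e) * (K - e).factorial)
        ≤ K^2 * (e.factorial * ((K-1).factorial * K ^ (e+1))) := Nat.mul_le_mul_left _ ihe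
      _ = (e.factorial * ((K-1).factorial * K ^ (e+1+1))) * K := by
          rw [pow_succ]; ring
      _ ≤ (e.factorial * ((K-1).factorial * K ^ (e+1+1))) * ((e+1) * (K - e)) :=
          Nat.mul_le_mul_left _ hkey
      _ = (e+1).factorial * ((K-1).factorial * K ^ (e+1+1)) * (K - e) := by
          rw [Nat.factorial_succ]; ring

lemma geom_half_le_two (a b : ℕ) : ∑ d ∈ Finset.Icc a b, ((1:ℝ)/2)^(d-a) ≤ 2 := by
  have hre : ∑ d ∈ Finset.Icc a b, ((1:ℝ)/2)^(d-a) = ∑ j ∈ Finset.range (b+1-a), ((1:ℝ)/2)^j := by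
    apply Finset.sum_nbij' (fun d => d - a) (fun j => j + a)
    · intro d hd; rw [Finset.mem_Icc] at hd; rw [Finset.mem_range]; omega
    · intro j hj; rw [Finset.mem_range] at hj; rw [Finset.mem_Icc]; omega
    · intro d hd; rw [Finset.mem_Icc] at hd; omega
    · intro j hj; omega
    · intro d hd; rfl
  rw [hre, geom_sum_eq (by norm_num : (1:ℝ)/2 ≠ 1)]
  rw [div_le_iff_of_neg (by norm_num : (1:ℝ)/2 - 1 < 0)]
  have : (0:ℝ) ≤ ((1:ℝ)/2) ^ (b+1-a) := by positivity
  linarith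

theorem sum_over_k_cycles_le (k : ℕ) (σ : Equiv.Perm (Fin k)) (x : ℝ)
    (hx : 2 * (k : ℝ)^2 < x) :
    ∑ ρ ∈ Finset.univ.filter
        (fun ρ : Equiv.Perm (Fin k) => ρ.IsCycle ∧ ρ.support = Finset.univ),
      x ^ (-(cayleyWeight (σ * ρ⁻¹) : ℝ)) ≤
      2 * ((Nat.factorial (k-1) : ℝ) / (Nat.factorial (k - cycleCount σ + 1) : ℝ)) *
        (k : ℝ) ^ (cycleCount σ) * x ^ (-(cycleCount σ : ℝ) + 1) := by
  classical
  rcases Nat.eq_zero_or_pos k with hk0 | hk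
  · subst hk0
    have hx0 : (0:ℝ) < x := by nlinarith
    have hempty : (Finset.univ.filter
        (fun ρ : Equiv.Perm (Fin 0) => ρ.IsCycle ∧ ρ.support = Finset.univ)) = ∅ := by
      apply Finset.filter_eq_empty_iff.2
      intro ρ _
      rintro ⟨⟨x0, -⟩, -⟩
      exact x0.elim0
    rw [hempty, Finset.sum_empty]
    have h1 : (0:ℝ) ≤ x ^ (-(cycleCount (1 : Equiv.Perm (Fin 0)) : ℝ) + 1) :=
      Real.rpow_nonneg hx0.le _
    have hσ1 : σ = 1 := Subsingleton.elim σ 1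
    subst hσ1
    positivity
  -- main case
  have hx0 : (0:ℝ) < x := by
    have : (0:ℝ) ≤ 2 * (k:ℝ)^2 := by positivity
    linarith
  set c := cycleCount σ with hc
  have hc1 : 1 ≤ c := by
    rw [hc, cycleCount_eq_ncyc]
    exact Fintype.card_pos_iff.mpr ⟨Quotient.mk _ ⟨0, hk⟩⟩
  have hck : c ≤ k := by rw [hc, cycleCount_eq_ncyc]; exact ncyc_le_k σ
  set e := c - 1 with he
  have hce : c = e + 1 := by omega
  have hwt : ∀ f : Equiv.Perm (Fin k), cayleyWeight f = (Dset f).card := by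
    intro f
    rw [cayleyWeight_eq, card_Dset, cycleCount_eq_ncyc]
  set F := Finset.univ.filter
      (fun ρ : Equiv.Perm (Fin k) => ρ.IsCycle ∧ ρ.support = Finset.univ) with hF
  have hlow : ∀ ρ ∈ F, e ≤ (Dset (σ * ρ⁻¹)).card := by
    intro ρ hρ
    rw [hF, Finset.mem_filter] at hρ
    obtain ⟨-, hcyc, hsupp⟩ := hρ
    have hρ1 : cycleCount ρ = 1 := by
      unfold cycleCount
      rw [Equiv.Perm.card_cycleType_eq_one.2 hcyc, hsupp]
      simp
    obtain ⟨l1, h11, h12, h13⟩ := exists_swap_factors (σ * ρ⁻¹)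
    obtain ⟨l2, h21, h22, h23⟩ := exists_swap_factors σ
    have hprod : ((l1.map Inv.inv).reverse ++ l2).prod = ρ := by
      rw [List.prod_append, ← List.prod_inv_reverse, h12, h22, mul_inv_rev, inv_inv]
      simp [mul_assoc]
    have hsw : ∀ τ ∈ (l1.map Inv.inv).reverse ++ l2, τ.IsSwap := by
      intro τ hτ
      rcases List.mem_append.1 hτ with h | h
      · rw [List.mem_reverse, List.mem_map] at h
        obtain ⟨τ', hτ', rfl⟩ := h
        obtain ⟨a, b, hab, rfl⟩ := h11 τ' hτ'
        exact ⟨a, b, hab, by rw [Equiv.swap_inv]⟩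
      · exact h21 τ h
    have hk_le := k_le_of_swap_list _ hsw
    rw [hprod, hρ1] at hk_le
    have hlen : ((l1.map Inv.inv).reverse ++ l2).length = l1.length + l2.length := by
      simp
    rw [hlen] at hk_le
    have hDp : (Dset (σ * ρ⁻¹)).card = k - ncyc (σ * ρ⁻¹) := card_Dset _
    have hcp : ncyc (σ * ρ⁻¹) ≤ k := ncyc_le_k _
    have hB1 : cycleCount (σ * ρ⁻¹) =
        Multiset.card (σ * ρ⁻¹).cycleType + (k - (σ * ρ⁻¹).support.card) := rfl
    have hB2 : c = Multiset.card σ.cycleType + (k - σ.support.card) := rfl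
    have hE1 := card_cycleType_le_support (σ * ρ⁻¹)
    have hE2 := support_card_le (σ * ρ⁻¹)
    have hE3 := card_cycleType_le_support σ
    have hE4 := support_card_le σ
    have hNC := cycleCount_eq_ncyc (σ * ρ⁻¹)
    omega
  -- rewrite sum
  have hinj : ∀ ρ1 ∈ F, ∀ ρ2 ∈ F, σ * ρ1⁻¹ = σ * ρ2⁻¹ → ρ1 = ρ2 := by
    intro ρ1 _ ρ2 _ h
    exact inv_injective (mul_left_cancel h)
  have hLHS : ∑ ρ ∈ F, x ^ (-(cayleyWeight (σ * ρ⁻¹) : ℝ)) =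
      ∑ π ∈ F.image (fun ρ => σ * ρ⁻¹), x ^ (-((Dset π).card : ℝ)) := by
    rw [Finset.sum_image hinj]
    exact Finset.sum_congr rfl (fun ρ _ => by rw [hwt])
  set G := Finset.univ.filter (fun π : Equiv.Perm (Fin k) => e ≤ (Dset π).card) with hG
  have hsub : F.image (fun ρ => σ * ρ⁻¹) ⊆ G := by
    intro π hπ
    rw [Finset.mem_image] at hπ
    obtain ⟨ρ, hρ, rfl⟩ := hπ
    rw [hG, Finset.mem_filter]
    exact ⟨Finset.mem_univ _, hlow ρ hρ⟩
  have hmono : ∑ π ∈ F.image (fun ρ => σ * ρ⁻¹), x ^ (-((Dset π).card : ℝ)) ≤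
      ∑ π ∈ G, x ^ (-((Dset π).card : ℝ)) :=
    Finset.sum_le_sum_of_subset_of_nonneg hsub
      (fun _ _ _ => Real.rpow_nonneg hx0.le _)
  have hmaps : ∀ π ∈ G, (Dset π).card ∈ Finset.Icc e k := by
    intro π hπ
    rw [hG, Finset.mem_filter] at hπ
    rw [Finset.mem_Icc]
    refine ⟨hπ.2, ?_⟩
    have := Finset.card_le_univ (Dset π)
    simpa using this
  have hfib : ∑ d ∈ Finset.Icc e k, ∑ π ∈ G.filter (fun π => (Dset π).card = d),
      x ^ (-((Dset π).card : ℝ)) = ∑ π ∈ G, x ^ (-((Dset π).card : ℝ)) :=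
    Finset.sum_fiberwise_of_maps_to hmaps _
  -- per fiber
  have hper : ∀ d ∈ Finset.Icc e k,
      ∑ π ∈ G.filter (fun π => (Dset π).card = d), x ^ (-((Dset π).card : ℝ)) ≤
      ((k.choose d) * k ^ d : ℝ) * x ^ (-(d:ℝ)) := by
    intro d hd
    rw [Finset.mem_Icc] at hd
    have hcount := card_perm_Dset_le hk d hd.2 (G.filter (fun π => (Dset π).card = d))
      (fun π hπ => (Finset.mem_filter.1 hπ).2)
    calc ∑ π ∈ G.filter (fun π => (Dset π).card = d), x ^ (-((Dset π).card : ℝ))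
        = ∑ _π ∈ G.filter (fun π => (Dset π).card = d), x ^ (-(d:ℝ)) := by
          apply Finset.sum_congr rfl
          intro π hπ
          rw [(Finset.mem_filter.1 hπ).2]
      _ = ((G.filter (fun π => (Dset π).card = d)).card : ℝ) * x ^ (-(d:ℝ)) := by
          rw [Finset.sum_const, nsmul_eq_mul]
      _ ≤ ((k.choose d) * k ^ d : ℝ) * x ^ (-(d:ℝ)) := by
          apply mul_le_mul_of_nonneg_right _ (Real.rpow_nonneg hx0.le _)
          exact_mod_cast hcount
  -- per d bound by geometric
  have hhalf : (k:ℝ)^2 / x ≤ 1/2 := by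
    rw [div_le_iff₀ hx0]
    nlinarith
  have hstep : ∀ d ∈ Finset.Icc e k,
      ((k.choose d) * k ^ d : ℝ) * x ^ (-(d:ℝ)) ≤
      ((k:ℝ) ^ (2*e) / (e.factorial : ℝ)) * x ^ (-(e:ℝ)) * (1/2)^(d-e) := by
    intro d hd
    rw [Finset.mem_Icc] at hd
    have hde : e ≤ d := hd.1
    have hfacpos : (0:ℝ) < (d.factorial : ℝ) := by exact_mod_cast d.factorial_pos
    have hefacpos : (0:ℝ) < (e.factorial : ℝ) := by exact_mod_cast e.factorial_pos
    have hchoose : ((k.choose d) : ℝ) ≤ (k:ℝ)^d / (d.factorial : ℝ) := by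
      rw [le_div_iff₀ hfacpos]
      have h1 : k.choose d * d.factorial ≤ k ^ d := by
        have h2 := Nat.descFactorial_le_pow k d
        rw [Nat.descFactorial_eq_factorial_mul_choose] at h2
        rwa [Nat.mul_comm] at h2
      exact_mod_cast h1
    have hxd : x ^ (-(d:ℝ)) = x ^ (-(e:ℝ)) * x ^ (-((d - e : ℕ):ℝ)) := by
      rw [← Real.rpow_add hx0]
      congr 1
      have : ((d - e : ℕ) : ℝ) = (d:ℝ) - (e:ℝ) := by
        exact Nat.cast_sub hde
      rw [this]
      ring
    have hgeo : (k:ℝ) ^ (2*(d-e)) * x ^ (-((d - e : ℕ):ℝ)) ≤ (1/2)^(d-e) := by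
      set j := d - e
      rw [Real.rpow_neg hx0.le, Real.rpow_natCast]
      have h1 : (k:ℝ) ^ (2*j) * (x ^ j)⁻¹ = ((k:ℝ)^2 / x)^j := by
        rw [div_pow, ← pow_mul]
        rw [div_eq_mul_inv]
      rw [h1]
      calc ((k:ℝ)^2 / x)^j ≤ (1/2:ℝ)^j := by
            apply pow_le_pow_left₀ (by positivity) hhalf
        _ = (1/2:ℝ)^j := rfl
    have hxpos_e : (0:ℝ) ≤ x ^ (-(e:ℝ)) := Real.rpow_nonneg hx0.le _
    have hxpos_d : (0:ℝ) ≤ x ^ (-((d - e : ℕ):ℝ)) := Real.rpow_nonneg hx0.le _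
    have hfac : (1:ℝ) / (d.factorial : ℝ) ≤ 1 / (e.factorial : ℝ) := by
      apply one_div_le_one_div_of_le hefacpos
      exact_mod_cast Nat.factorial_le hde
    calc ((k.choose d) * k ^ d : ℝ) * x ^ (-(d:ℝ))
        ≤ ((k:ℝ)^d / (d.factorial : ℝ) * (k:ℝ)^d) * x ^ (-(d:ℝ)) := by
          apply mul_le_mul_of_nonneg_right _ (Real.rpow_nonneg hx0.le _)
          apply mul_le_mul_of_nonneg_right hchoose (by positivity)
      _ = ((k:ℝ)^(2*d) / (d.factorial : ℝ)) * x ^ (-(d:ℝ)) := by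
          rw [two_mul, pow_add]
          ring
      _ ≤ ((k:ℝ)^(2*d) / (e.factorial : ℝ)) * x ^ (-(d:ℝ)) := by
          apply mul_le_mul_of_nonneg_right _ (Real.rpow_nonneg hx0.le _)
          exact div_le_div_of_nonneg_left (by positivity) hefacpos
            (by exact_mod_cast Nat.factorial_le hde)
      _ = ((k:ℝ) ^ (2*e) / (e.factorial : ℝ)) * x ^ (-(e:ℝ)) *
            ((k:ℝ) ^ (2*(d-e)) * x ^ (-((d - e : ℕ):ℝ))) := by
          rw [hxd]
          have h2 : (k:ℝ)^(2*d) = (k:ℝ)^(2*e) * (k:ℝ)^(2*(d-e)) := by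
            rw [← pow_add]
            congr 1
            omega
          rw [h2]
          ring
      _ ≤ ((k:ℝ) ^ (2*e) / (e.factorial : ℝ)) * x ^ (-(e:ℝ)) * (1/2)^(d-e) := by
          apply mul_le_mul_of_nonneg_left hgeo (by positivity)
  -- combine
  have hgeom := geom_half_le_two e k
  set B := ((k:ℝ) ^ (2*e) / (e.factorial : ℝ)) * x ^ (-(e:ℝ)) with hB
  have hBpos : (0:ℝ) ≤ B := by
    rw [hB]
    have := Real.rpow_nonneg hx0.le (-(e:ℝ))
    positivity
  have htot : ∑ ρ ∈ F, x ^ (-(cayleyWeight (σ * ρ⁻¹) : ℝ)) ≤ 2 * B := by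
    rw [hLHS]
    refine le_trans hmono ?_
    rw [← hfib]
    calc ∑ d ∈ Finset.Icc e k, ∑ π ∈ G.filter (fun π => (Dset π).card = d),
          x ^ (-((Dset π).card : ℝ))
        ≤ ∑ d ∈ Finset.Icc e k, B * (1/2)^(d-e) := by
          apply Finset.sum_le_sum
          intro d hd
          exact le_trans (hper d hd) (hstep d hd)
      _ = B * ∑ d ∈ Finset.Icc e k, ((1:ℝ)/2)^(d-e) := by
          rw [Finset.mul_sum]
      _ ≤ B * 2 := mul_le_mul_of_nonneg_left hgeom hBpos
      _ = 2 * B := by ring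
  refine le_trans htot ?_
  -- final comparison
  have hxe : x ^ (-(c : ℝ) + 1) = x ^ (-(e:ℝ)) := by
    congr 1
    rw [hce]
    push_cast
    ring
  rw [hxe]
  have hkc1 : k - c + 1 = k - e := by omega
  rw [hkc1]
  have hfinal : (k:ℝ) ^ (2*e) / (e.factorial : ℝ) ≤
      ((k-1).factorial : ℝ) / (((k-e).factorial : ℝ)) * (k:ℝ)^c := by
    have hp1 : (0:ℝ) < (e.factorial : ℝ) := by exact_mod_cast e.factorial_pos
    have hp2 : (0:ℝ) < ((k-e).factorial : ℝ) := by exact_mod_cast (k-e).factorial_pos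
    rw [div_mul_eq_mul_div, div_le_div_iff₀ hp1 hp2]
    have hNK := NK_ineq k e hk (by omega)
    have hNK' : ((k ^ (2*e) * (k - e).factorial : ℕ) : ℝ) ≤
        ((e.factorial * ((k-1).factorial * k ^ (e+1)) : ℕ) : ℝ) := by
      exact_mod_cast hNK
    push_cast at hNK'
    rw [hce]
    push_cast
    nlinarith [hNK']
  have hxnn : (0:ℝ) ≤ x ^ (-(e:ℝ)) := Real.rpow_nonneg hx0.le _
  calc 2 * B = 2 * ((k:ℝ) ^ (2*e) / (e.factorial : ℝ)) * x ^ (-(e:ℝ)) := by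
        rw [hB]; ring
    _ ≤ 2 * (((k-1).factorial : ℝ) / (((k-e).factorial : ℝ)) * (k:ℝ)^c) * x ^ (-(e:ℝ)) := by
        apply mul_le_mul_of_nonneg_right _ hxnn
        apply mul_le_mul_of_nonneg_left hfinal (by norm_num)
    _ = 2 * (((k-1).factorial : ℝ) / (((k-e).factorial : ℝ))) * (k:ℝ)^c * x ^ (-(e:ℝ)) := by
        ring
end

section
/- The number of k-cycles ρ in S_k at minimal transposition distance c(σ) - 1 from a permutation σ with m cycles is at most ((k-1)!/(k-m+1)!)·k^m. -/
open scoped Classical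
open Nat

/-- There is a list of swaps of length `cayleyWeight π` with product `π`. -/
lemma exists_swap_list {k : ℕ} (π : Equiv.Perm (Fin k)) :
    ∃ l : List (Equiv.Perm (Fin k)), l.length = cayleyWeight π ∧
      (∀ τ ∈ l, τ.IsSwap) ∧ l.prod = π := by
  have hne : {m | ∃ l : List (Equiv.Perm (Fin k)),
      l.length = m ∧ (∀ τ ∈ l, τ.IsSwap) ∧ l.prod = π}.Nonempty := by
    obtain ⟨l, hl1, hl2⟩ := (Equiv.Perm.truncSwapFactors π).out
    exact ⟨l.length, l, rfl, hl2, hl1⟩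
  exact Nat.sInf_mem hne

/-- Two swaps with the same support are equal. -/
lemma isSwap_support_inj {k : ℕ} {τ₁ τ₂ : Equiv.Perm (Fin k)} (h1 : τ₁.IsSwap)
    (h2 : τ₂.IsSwap) (h : τ₁.support = τ₂.support) : τ₁ = τ₂ := by
  obtain ⟨a, b, hab, rfl⟩ := h1
  obtain ⟨c, d, hcd, rfl⟩ := h2
  rw [Equiv.Perm.support_swap hab, Equiv.Perm.support_swap hcd] at h
  have hc : c = a ∨ c = b := by
    have : c ∈ ({a, b} : Finset (Fin k)) := by
      rw [h]; exact Finset.mem_insert_self c {d}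
    simpa using this
  have hd : d = a ∨ d = b := by
    have : d ∈ ({a, b} : Finset (Fin k)) := by
      rw [h]; exact Finset.mem_insert_of_mem (Finset.mem_singleton_self d)
    simpa using this
  rcases hc with rfl | rfl <;> rcases hd with rfl | rfl
  · exact absurd rfl hcd
  · rfl
  · exact Equiv.swap_comm _ _
  · exact absurd rfl hcd

lemma card_swaps_le (k : ℕ) :
    Fintype.card {τ : Equiv.Perm (Fin k) // τ.IsSwap} ≤ k.choose 2 := by
  have hinj : Function.Injective
      (fun τ : {τ : Equiv.Perm (Fin k) // τ.IsSwap} =>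
        (⟨τ.1.support, Equiv.Perm.card_support_eq_two.mpr τ.2⟩ :
          {s : Finset (Fin k) // s.card = 2})) := by
    intro a b hab
    exact Subtype.ext (isSwap_support_inj a.2 b.2 (congrArg Subtype.val hab))
  calc Fintype.card {τ : Equiv.Perm (Fin k) // τ.IsSwap}
      ≤ Fintype.card {s : Finset (Fin k) // s.card = 2} :=
        Fintype.card_le_of_injective _ hinj
    _ = (Fintype.card (Fin k)).choose 2 := Fintype.card_finset_len 2
    _ = k.choose 2 := by rw [Fintype.card_fin]

lemma cycleCount_le {k : ℕ} (σ : Equiv.Perm (Fin k)) : cycleCount σ ≤ k := by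
  have hall : ∀ (s : Multiset ℕ), (∀ x ∈ s, 1 ≤ x) → Multiset.card s ≤ s.sum := by
    intro s
    induction s using Multiset.induction with
    | empty => simp
    | cons a s ih =>
      intro h
      have h1 := ih (fun x hx => h x (Multiset.mem_cons_of_mem hx))
      have h2 := h a (Multiset.mem_cons_self a s)
      simp only [Multiset.card_cons, Multiset.sum_cons]
      omega
  have h1 : Multiset.card σ.cycleType ≤ σ.support.card := by
    rw [← Equiv.Perm.sum_cycleType]
    exact hall _ (fun x hx => le_trans (by norm_num)
      (Equiv.Perm.two_le_of_mem_cycleType hx))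
  have h2 : σ.support.card ≤ k := by
    have := Finset.card_le_univ σ.support
    simpa [Finset.card_univ] using this
  unfold cycleCount
  omega

lemma one_le_cycleCount {k : ℕ} (hk : 1 ≤ k) (σ : Equiv.Perm (Fin k)) :
    1 ≤ cycleCount σ := by
  rcases eq_or_ne σ 1 with rfl | h
  · simp only [cycleCount, Equiv.Perm.cycleType_one, Equiv.Perm.support_one,
      Multiset.card_zero, Finset.card_empty]
    omega
  · have h0 : σ.cycleType ≠ 0 := fun h0 => h (Equiv.Perm.cycleType_eq_zero.mp h0)
    have := Multiset.card_pos.mpr h0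
    unfold cycleCount
    omega

lemma fact_le_pow_pred : ∀ (n c : ℕ), n ≤ c → n ! ≤ c ^ (n - 1) := by
  intro n
  induction n with
  | zero => intro c _; simp
  | succ p ih =>
    intro c h
    cases p with
    | zero => simp
    | succ q =>
      have h1 : (q + 1)! ≤ c ^ q := by
        have := ih c (by omega)
        simpa using this
      calc (q + 2)! = (q + 2) * (q + 1)! := rfl
        _ ≤ c * c ^ q := Nat.mul_le_mul h h1
        _ = c ^ (q + 1) := by rw [pow_succ]; ring

/-- Counting bound: the filtered set has at most `(k.choose 2)^(m-1)` elements. -/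
lemma card_filter_le_choose_pow {k : ℕ} (σ : Equiv.Perm (Fin k)) :
    (Finset.univ.filter
        (fun ρ : Equiv.Perm (Fin k) => ρ.IsCycle ∧ ρ.support = Finset.univ ∧
          cayleyWeight (σ * ρ⁻¹) = cycleCount σ - 1)).card ≤
      (k.choose 2) ^ (cycleCount σ - 1) := by
  classical
  set m := cycleCount σ with hm
  set F := Finset.univ.filter
      (fun ρ : Equiv.Perm (Fin k) => ρ.IsCycle ∧ ρ.support = Finset.univ ∧
        cayleyWeight (σ * ρ⁻¹) = m - 1) with hF
  have key : ∀ x : {x // x ∈ F}, ∃ l : List (Equiv.Perm (Fin k)),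
      l.length = m - 1 ∧ (∀ τ ∈ l, τ.IsSwap) ∧ l.prod = σ * (x.1)⁻¹ := by
    intro x
    have hx := (Finset.mem_filter.mp x.2).2.2.2
    obtain ⟨l, h1, h2, h3⟩ := exists_swap_list (σ * (x.1)⁻¹)
    exact ⟨l, by rw [h1, hx], h2, h3⟩
  choose L hlen hswap hprod using key
  set g : {x // x ∈ F} → (Fin (m - 1) → {τ : Equiv.Perm (Fin k) // τ.IsSwap}) :=
    fun x i => ⟨(L x).get (Fin.cast (hlen x).symm i),
      hswap x _ (List.get_mem _ _)⟩ with hg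
  have hginj : Function.Injective g := by
    intro x y hxy
    have hL : L x = L y := by
      apply List.ext_get (by rw [hlen x, hlen y])
      intro n hn1 hn2
      have hn : n < m - 1 := by rw [← hlen x]; exact hn1
      have := congrArg Subtype.val (congrFun hxy ⟨n, hn⟩)
      simpa [hg] using this
    have : σ * (x.1)⁻¹ = σ * (y.1)⁻¹ := by rw [← hprod x, ← hprod y, hL]
    have : (x.1)⁻¹ = (y.1)⁻¹ := mul_left_cancel this
    exact Subtype.ext (inv_injective this)
  calc F.card = Fintype.card {x // x ∈ F} := (Fintype.card_coe F).symm
    _ ≤ Fintype.card (Fin (m - 1) → {τ : Equiv.Perm (Fin k) // τ.IsSwap}) :=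
        Fintype.card_le_of_injective g hginj
    _ = (Fintype.card {τ : Equiv.Perm (Fin k) // τ.IsSwap}) ^ (m - 1) := by
        rw [Fintype.card_fun, Fintype.card_fin]
    _ ≤ (k.choose 2) ^ (m - 1) := Nat.pow_le_pow_left (card_swaps_le k) _

/-- The main counting inequality, in `ℕ`. -/
lemma key_nat_ineq (k : ℕ) (σ : Equiv.Perm (Fin k)) :
    (Finset.univ.filter
        (fun ρ : Equiv.Perm (Fin k) => ρ.IsCycle ∧ ρ.support = Finset.univ ∧
          cayleyWeight (σ * ρ⁻¹) = cycleCount σ - 1)).card * (k - cycleCount σ + 1)! ≤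
      (k - 1)! * k ^ (cycleCount σ) := by
  classical
  set m := cycleCount σ with hm
  set F := Finset.univ.filter
      (fun ρ : Equiv.Perm (Fin k) => ρ.IsCycle ∧ ρ.support = Finset.univ ∧
        cayleyWeight (σ * ρ⁻¹) = m - 1) with hFdef
  have hFuniv : F.card ≤ k ! := by
    simpa [Finset.card_univ, Fintype.card_perm, Fintype.card_fin] using
      Finset.card_le_univ F
  rcases Nat.eq_zero_or_pos k with hk | hk
  · subst hk
    have hσ : σ = 1 := by ext x; exact x.elim0
    have hm0 : m = 0 := by
      rw [hm, hσ]
      simp [cycleCount, Equiv.Perm.cycleType_one]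
    rw [hm0]
    simpa using hFuniv
  · have hm1 : 1 ≤ m := one_le_cycleCount hk σ
    have hmk : m ≤ k := cycleCount_le σ
    rcases le_or_gt (2 * m) (k + 1) with hB | hA
    · -- small m: use the swap-list counting bound
      have hF : F.card ≤ (k.choose 2) ^ (m - 1) := card_filter_le_choose_pow σ
      rcases Nat.lt_or_ge m 2 with h2 | h2
      · -- m = 1
        have hme : m = 1 := by omega
        rw [hme]
        have hFle : F.card ≤ 1 := by
          have : (k.choose 2) ^ (m - 1) = 1 := by rw [hme]; simp
          omega
        have hke : k - 1 + 1 = k := by omega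
        rw [hke, pow_one]
        calc F.card * k ! ≤ 1 * k ! := Nat.mul_le_mul_right _ hFle
          _ = k ! := by ring
          _ = (k - 1)! * k := by
              rw [← Nat.mul_factorial_pred hk.ne']; ring
      · -- 2 ≤ m
        have hchoose2 : k.choose 2 ≤ (k - m + 2) * k := by
          rw [Nat.choose_two_right]
          apply Nat.div_le_of_le_mul
          have hle : k - 1 ≤ 2 * (k - m + 2) := by omega
          calc k * (k - 1) ≤ k * (2 * (k - m + 2)) := Nat.mul_le_mul_left k hle
            _ = 2 * ((k - m + 2) * k) := by ring
        have hcc : k.choose 2 ≤ k * k := by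
          refine le_trans hchoose2 (Nat.mul_le_mul_right k ?_)
          omega
        have hdesc : (k - m + 2) ^ (m - 2) ≤ (k - 1).descFactorial (m - 2) := by
          have h := Nat.pow_sub_le_descFactorial (k - 1) (m - 2)
          have he : k - 1 + 1 - (m - 2) = k - m + 2 := by omega
          rwa [he] at h
        have hmain : (k.choose 2) ^ (m - 1) ≤ (k - 1).descFactorial (m - 2) * k ^ m := by
          have e1 : m - 1 = (m - 2) + 1 := by omega
          calc (k.choose 2) ^ (m - 1) = (k.choose 2) ^ (m - 2) * (k.choose 2) := by
                rw [e1, pow_succ]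
            _ ≤ ((k - m + 2) * k) ^ (m - 2) * (k * k) :=
                Nat.mul_le_mul (Nat.pow_le_pow_left hchoose2 _) hcc
            _ = (k - m + 2) ^ (m - 2) * (k ^ (m - 2) * k ^ 2) := by
                rw [mul_pow]; ring
            _ = (k - m + 2) ^ (m - 2) * k ^ m := by
                rw [← pow_add, show m - 2 + 2 = m from by omega]
            _ ≤ (k - 1).descFactorial (m - 2) * k ^ m :=
                Nat.mul_le_mul_right _ hdesc
        have hfac : (k - m + 1)! * (k - 1).descFactorial (m - 2) = (k - 1)! := by
          have h := Nat.factorial_mul_descFactorial (show m - 2 ≤ k - 1 by omega)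
          rwa [show (k - 1) - (m - 2) = k - m + 1 from by omega] at h
        calc F.card * (k - m + 1)!
            ≤ (k.choose 2) ^ (m - 1) * (k - m + 1)! := Nat.mul_le_mul_right _ hF
          _ ≤ ((k - 1).descFactorial (m - 2) * k ^ m) * (k - m + 1)! :=
              Nat.mul_le_mul_right _ hmain
          _ = ((k - m + 1)! * (k - 1).descFactorial (m - 2)) * k ^ m := by ring
          _ = (k - 1)! * k ^ m := by rw [hfac]
    · -- large m: use the trivial bound `F.card ≤ k!`
      have h1 : (k - m + 1)! ≤ k ^ (k - m) := by
        have := fact_le_pow_pred (k - m + 1) k (by omega)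
        rwa [show k - m + 1 - 1 = k - m from by omega] at this
      calc F.card * (k - m + 1)! ≤ k ! * k ^ (k - m) := Nat.mul_le_mul hFuniv h1
        _ = (k - 1)! * (k * k ^ (k - m)) := by
            rw [← Nat.mul_factorial_pred hk.ne']; ring
        _ = (k - 1)! * k ^ (k - m + 1) := by rw [pow_succ]; ring
        _ ≤ (k - 1)! * k ^ m := by
            refine Nat.mul_le_mul_left _ (Nat.pow_le_pow_right hk ?_)
            omega

/-- The number of `k`-cycles at minimal transposition distance `c(σ) - 1` from a
permutation `σ` with `m = c(σ)` cycles is at most `((k-1)!/(k-m+1)!)·k^m`. -/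
theorem card_k_cycles_min_distance_le (k : ℕ) (σ : Equiv.Perm (Fin k)) :
    ((Finset.univ.filter
        (fun ρ : Equiv.Perm (Fin k) => ρ.IsCycle ∧ ρ.support = Finset.univ ∧
          cayleyWeight (σ * ρ⁻¹) = cycleCount σ - 1)).card : ℝ) ≤
      (Nat.factorial (k-1) : ℝ) / (Nat.factorial (k - cycleCount σ + 1) : ℝ) *
        (k : ℝ) ^ (cycleCount σ) := by
  have hpos : (0 : ℝ) < (Nat.factorial (k - cycleCount σ + 1) : ℝ) := by
    exact_mod_cast Nat.factorial_pos _
  rw [div_mul_eq_mul_div, le_div_iff₀ hpos]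
  have key := key_nat_ineq k σ
  calc ((Finset.univ.filter
        (fun ρ : Equiv.Perm (Fin k) => ρ.IsCycle ∧ ρ.support = Finset.univ ∧
          cayleyWeight (σ * ρ⁻¹) = cycleCount σ - 1)).card : ℝ) *
          (Nat.factorial (k - cycleCount σ + 1) : ℝ)
      = (((Finset.univ.filter
        (fun ρ : Equiv.Perm (Fin k) => ρ.IsCycle ∧ ρ.support = Finset.univ ∧
          cayleyWeight (σ * ρ⁻¹) = cycleCount σ - 1)).card *
          Nat.factorial (k - cycleCount σ + 1) : ℕ) : ℝ) := by push_cast; ring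
    _ ≤ (((k-1)! * k ^ (cycleCount σ) : ℕ) : ℝ) := by exact_mod_cast key
    _ = (Nat.factorial (k-1) : ℝ) * (k : ℝ) ^ (cycleCount σ) := by push_cast; ring
end
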